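/- arXiv:2112.02539 — 5 statements merged into one kernel-verified Lean document; each statement's English description precedes it below -/
import Mathlib

section
/- If 𝔐 is a free graded monoid with 𝔐_1 a singleton and an injective degree-2 suspension map S whose image is exactly the set of primitive elements of degree ≥ 2, then the number of elements of 𝔐 of degree n equals the n-th Motzkin number for every n. -/
/-- An element of positive degree of a graded monoid is primitive if it is not
the product of two elements of positive degree. -/
def GradedPrimitive {M : Type*} [Monoid M] (deg : M → ℕ) (x : M) : Prop :=
  0 < deg x ∧ ¬ ∃ a b : M, 0 < deg a ∧ 0 < deg b ∧ x = a * b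

/-- if `M` is a free graded monoid (unique factorization into
primitives) whose degree-1 part is a singleton, with an injective degree-2
suspension map `S` whose image is exactly the set of primitive elements of
degree at least 2, then the number of elements of `M` of degree `n` is the
`n`-th Motzkin number. -/
theorem card_of_free_graded_monoid {M : Type*} [Monoid M] (deg : M → ℕ)
    (hdeg1 : deg 1 = 0) (hdegmul : ∀ a b : M, deg (a * b) = deg a + deg b)
    (hfree : ∀ x : M, ∃! L : List M, (∀ y ∈ L, GradedPrimitive deg y) ∧ L.prod = x)
    (hone : ∃! x : M, deg x = 1)
    (S : M → M) (hS : ∀ x, deg (S x) = deg x + 2)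
    (hSinj : Function.Injective S)
    (hSrange : Set.range S = {x : M | GradedPrimitive deg x ∧ 2 ≤ deg x})
    (Mnum : ℕ → ℕ) (h0 : Mnum 0 = 1) (h1 : Mnum 1 = 1)
    (hrec : ∀ n, Mnum (n + 1) =
      Mnum n + ∑ k ∈ Finset.range n, Mnum k * Mnum (n - 1 - k)) :
    ∀ n, Nat.card {x : M // deg x = n} = Mnum n := by
  classical
  obtain ⟨u, hu, huuniq⟩ := hone
  -- u is primitive
  have huprim : GradedPrimitive deg u := by
    refine ⟨by omega, ?_⟩
    rintro ⟨a, b, ha, hb, rfl⟩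
    rw [hdegmul] at hu; omega
  -- elements of degree 0 are trivial
  have hdeg0 : ∀ x : M, deg x = 0 → x = 1 := by
    intro x hx
    obtain ⟨L, ⟨hL1, hL2⟩, -⟩ := hfree x
    cases L with
    | nil => simpa using hL2.symm
    | cons p t =>
      exfalso
      have hp := (hL1 p List.mem_cons_self).1
      have : deg x = deg p + deg t.prod := by
        rw [← hL2, List.prod_cons, hdegmul]
      omega
  -- cancellation of primitive heads
  have hcancel : ∀ p p' y y' : M, GradedPrimitive deg p → GradedPrimitive deg p' →
      p * y = p' * y' → p = p' ∧ y = y' := by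
    intro p p' y y' hp hp' heq
    obtain ⟨L, ⟨hL1, hL2⟩, -⟩ := hfree y
    obtain ⟨L', ⟨hL1', hL2'⟩, -⟩ := hfree y'
    obtain ⟨K, hK, hKu⟩ := hfree (p * y)
    have e1 : p :: L = K := by
      refine hKu _ ⟨?_, by rw [List.prod_cons, hL2]⟩
      intro z hz
      rcases List.mem_cons.1 hz with rfl | hz
      · exact hp
      · exact hL1 z hz
    have e2 : p' :: L' = K := by
      refine hKu _ ⟨?_, by rw [List.prod_cons, hL2', heq]⟩
      intro z hz
      rcases List.mem_cons.1 hz with rfl | hz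
      · exact hp'
      · exact hL1' z hz
    have e3 : p :: L = p' :: L' := e1.trans e2.symm
    have hpp : p = p' := by injection e3
    have hLL : L = L' := by injection e3
    exact ⟨hpp, by rw [← hL2, ← hL2', hLL]⟩
  have key : ∀ n, Finite {x : M // deg x = n} ∧ Nat.card {x : M // deg x = n} = Mnum n := by
    intro n
    induction n using Nat.strong_induction_on with
    | _ n ih =>
      match n with
      | 0 =>
        haveI : Unique {x : M // deg x = 0} :=
          ⟨⟨⟨1, hdeg1⟩⟩, fun x => Subtype.ext (hdeg0 x.1 x.2)⟩
        exact ⟨inferInstance, by rw [Nat.card_unique, h0]⟩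
      | (n + 1) =>
        -- the bijection
        set R := ({y : M // deg y = n} ⊕
          Σ k : Fin n, {a : M // deg a = (k : ℕ)} × {b : M // deg b = n - 1 - (k : ℕ)}) with hR
        have hSprim : ∀ a : M, GradedPrimitive deg (S a) := by
          intro a
          have : S a ∈ Set.range S := ⟨a, rfl⟩
          rw [hSrange] at this
          exact this.1
        let g : R → {x : M // deg x = n + 1} := fun z =>
          match z with
          | Sum.inl y => ⟨u * y.1, by rw [hdegmul, hu, y.2, Nat.add_comm]⟩
          | Sum.inr ⟨k, a, b⟩ => ⟨S a.1 * b.1, by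
              have := k.isLt
              rw [hdegmul, hS, a.2, b.2]; omega⟩
        have hginj : Function.Injective g := by
          rintro (⟨y, hy⟩ | ⟨⟨k, hk⟩, ⟨a, ha⟩, ⟨b, hb⟩⟩)
            (⟨y', hy'⟩ | ⟨⟨k', hk'⟩, ⟨a', ha'⟩, ⟨b', hb'⟩⟩) h
          · have h' : u * y = u * y' := congrArg Subtype.val h
            obtain ⟨-, h2⟩ := hcancel _ _ _ _ huprim huprim h'
            simp [h2]
          · have h' : u * y = S a' * b' := congrArg Subtype.val h
            obtain ⟨h1, -⟩ := hcancel _ _ _ _ huprim (hSprim a') h'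
            exfalso
            have : deg u = deg (S a') := by rw [h1]
            rw [hu, hS] at this; omega
          · have h' : S a * b = u * y' := congrArg Subtype.val h
            obtain ⟨h1, -⟩ := hcancel _ _ _ _ (hSprim a) huprim h'
            exfalso
            have : deg (S a) = deg u := by rw [h1]
            rw [hu, hS] at this; omega
          · have h' : S a * b = S a' * b' := congrArg Subtype.val h
            obtain ⟨h1, h2⟩ := hcancel _ _ _ _ (hSprim a) (hSprim a') h'
            have haa : a = a' := hSinj h1
            simp only [Fin.val_mk] at ha ha'
            have hkk : k = k' := by rw [← ha, ← ha', haa]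
            subst hkk; subst haa; subst h2
            rfl
        have hgsurj : Function.Surjective g := by
          rintro ⟨x, hx⟩
          obtain ⟨L, ⟨hL1, hL2⟩, -⟩ := hfree x
          cases L with
          | nil =>
            exfalso
            have : x = 1 := by simpa using hL2.symm
            rw [this, hdeg1] at hx; omega
          | cons p t =>
            have hp := hL1 p List.mem_cons_self
            have hxpt : x = p * t.prod := by rw [← hL2, List.prod_cons]
            have hdx : deg p + deg t.prod = n + 1 := by
              rw [← hdegmul, ← hxpt, hx]
            rcases Nat.lt_or_ge (deg p) 2 with hlt | hge
            · have hp1 : deg p = 1 := by have := hp.1; omega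
              have hpu : p = u := huuniq p hp1
              refine ⟨Sum.inl ⟨t.prod, by omega⟩, ?_⟩
              apply Subtype.ext
              show u * t.prod = x
              rw [hxpt, hpu]
            · have hpmem : p ∈ Set.range S := by
                rw [hSrange]; exact ⟨hp, hge⟩
              obtain ⟨a, rfl⟩ := hpmem
              have hda : deg a + 2 = deg (S a) := (hS a).symm
              have hkn : deg a < n := by omega
              refine ⟨Sum.inr ⟨⟨deg a, hkn⟩, ⟨a, rfl⟩, ⟨t.prod, show deg t.prod = n - 1 - deg a by omega⟩⟩, ?_⟩
              apply Subtype.ext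
              show S a * t.prod = x
              rw [hxpt]
        have E : R ≃ {x : M // deg x = n + 1} := Equiv.ofBijective g ⟨hginj, hgsurj⟩
        haveI F1 : Finite {y : M // deg y = n} := (ih n (by omega)).1
        haveI F2 : ∀ k : Fin n, Finite {a : M // deg a = (k : ℕ)} :=
          fun k => (ih k (by omega)).1
        haveI F3 : ∀ k : Fin n, Finite {b : M // deg b = n - 1 - (k : ℕ)} :=
          fun k => (ih (n - 1 - (k : ℕ)) (by omega)).1
        haveI : Finite R := by
          rw [hR]; infer_instance
        refine ⟨Finite.of_equiv R E, ?_⟩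
        rw [← Nat.card_congr E, hR, Nat.card_sum, hrec n, (ih n (by omega)).2]
        congr 1
        haveI G2 : ∀ k : Fin n, Fintype {a : M // deg a = (k : ℕ)} :=
          fun k => Fintype.ofFinite _
        haveI G3 : ∀ k : Fin n, Fintype {b : M // deg b = n - 1 - (k : ℕ)} :=
          fun k => Fintype.ofFinite _
        rw [Nat.card_eq_fintype_card, Fintype.card_sigma]
        rw [← Fin.sum_univ_eq_sum_range (fun k => Mnum k * Mnum (n - 1 - k)) n]
        refine Finset.sum_congr rfl fun k _ => ?_
        rw [Fintype.card_prod, ← Nat.card_eq_fintype_card, ← Nat.card_eq_fintype_card,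
          (ih k (by omega)).2, (ih (n - 1 - (k : ℕ)) (by omega)).2]
  exact fun n => (key n).2
end

section
/- For a multisegment M of weight (n+1,...,n+1) over [1,n] and a multisegment N of weight (q+1,...,q+1) over [1,q], the concatenation M * N is a well-defined multisegment of weight (n+q+1,...,n+q+1) over [1,n+q]. -/
/-- A segment is an interval `[i,j]` of positive integers, encoded as the
pair `(i, j)` with `1 ≤ i ≤ j`.  A multisegment is a multiset of segments. -/
abbrev Seg := ℕ × ℕ

/-- The weight of the multisegment `M` at `k`: the number of segments of `M`
containing `k`. -/
def wt (M : Multiset Seg) (k : ℕ) : ℕ :=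
  (M.filter (fun s => s.1 ≤ k ∧ k ≤ s.2)).card

/-- `M` belongs to `R_n`: all its members are segments contained in `[1,n]`,
and its weight is `(n+1, …, n+1)`. -/
def InR (n : ℕ) (M : Multiset Seg) : Prop :=
  (∀ s ∈ M, 1 ≤ s.1 ∧ s.1 ≤ s.2 ∧ s.2 ≤ n) ∧
  ∀ k, 1 ≤ k → k ≤ n → wt M k = n + 1

/-- Concatenation of multisegments `M ∈ R_p` and `N ∈ R_q`: keep the segments
of `M` ending before `p` and those of `N` (shifted by `p`) starting after `1`,
and glue the segments of `M` ending at `p` (padded with `q` copies of `[1,p]`)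
to the segments of `N` starting at `1` (padded with `p` copies of `[1,q]`),
matching shortest with shortest. -/
def concatMS (p q : ℕ) (M N : Multiset Seg) : Multiset Seg :=
  if p = 0 then N
  else if q = 0 then M
  else
    M.filter (fun s => s.2 < p)
      + (N.filter (fun s => 1 < s.1)).map (fun s => (s.1 + p, s.2 + p))
      + ↑(List.map (fun x : ℕ × ℕ => (x.1, x.2 + p))
          (List.zip
            ((((M.filter (fun s : Seg => s.2 = p)).map Prod.fst
                + Multiset.replicate q 1).sort (· ≤ ·)).reverse)
            ((((N.filter (fun s : Seg => s.1 = 1)).map Prod.snd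
                + Multiset.replicate p q).sort (· ≤ ·)))))

/-- Suspension of a multisegment `M ∈ R_n`: each segment is pushed inward
(`[i,j] ↦ [i+1,j+1]`, keeping start `1` at `1` and sending end `n` to `n+2`)
and the four segments `[1,1]`, `[2,n+2]`, `[1,n+1]`, `[n+2,n+2]` are added;
the suspension of the empty multisegment is `{[1,1],[2,2],[1,2]}`. -/
def suspMS (n : ℕ) (M : Multiset Seg) : Multiset Seg :=
  if n = 0 then {(1, 1), (2, 2), (1, 2)}
  else
    M.map (fun s => (if s.1 = 1 then 1 else s.1 + 1, if s.2 = n then n + 2 else s.2 + 1))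
      + {(1, 1), (2, n + 2), (1, n + 1), (n + 2, n + 2)}

private lemma wt_add' (M N : Multiset Seg) (k : ℕ) : wt (M + N) k = wt M k + wt N k := by
  simp [wt, Multiset.filter_add]

private lemma wt_eq_countP (M : Multiset Seg) (k : ℕ) :
    wt M k = M.countP (fun s => s.1 ≤ k ∧ k ≤ s.2) := by
  rw [wt, Multiset.countP_eq_card_filter]

/-- the concatenation of a multisegment of weight `(p+1,…,p+1)`
over `[1,p]` with a multisegment of weight `(q+1,…,q+1)` over `[1,q]` is a
well-defined multisegment of weight `(p+q+1,…,p+q+1)` over `[1,p+q]`. -/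
theorem concat_mem_R (p q : ℕ) (M N : Multiset Seg)
    (hM : InR p M) (hN : InR q N) :
    InR (p + q) (concatMS p q M N) := by
  rcases eq_or_ne p 0 with hp | hp
  · subst hp; simpa [concatMS] using hN
  rcases eq_or_ne q 0 with hq | hq
  · subst hq; simpa [concatMS, hp] using hM
  have hp1 : 1 ≤ p := Nat.one_le_iff_ne_zero.2 hp
  have hq1 : 1 ≤ q := Nat.one_le_iff_ne_zero.2 hq
  set Mp := M.filter (fun s : Seg => s.2 = p) with hMpdef
  set N1 := N.filter (fun s : Seg => s.1 = 1) with hN1def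
  set A : Multiset ℕ := Mp.map Prod.fst + Multiset.replicate q 1 with hAdef
  set B : Multiset ℕ := N1.map Prod.snd + Multiset.replicate p q with hBdef
  set lA := (A.sort (· ≤ ·)).reverse with hlAdef
  set lB := B.sort (· ≤ ·) with hlBdef
  set Z := lA.zip lB with hZdef
  have hconcat : concatMS p q M N =
      M.filter (fun s => s.2 < p)
      + (N.filter (fun s => 1 < s.1)).map (fun s => (s.1 + p, s.2 + p))
      + ↑(Z.map (fun x : ℕ × ℕ => (x.1, x.2 + p))) := by
    rw [concatMS, if_neg hp, if_neg hq]
  -- cardinalities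
  have hMpM : M.filter (fun s : Seg => s.1 ≤ p ∧ p ≤ s.2) = Mp := by
    apply Multiset.filter_congr
    intro s hs
    obtain ⟨h1, h2, h3⟩ := hM.1 s hs
    omega
  have hMpcard : Multiset.card Mp = p + 1 := by
    have h := hM.2 p hp1 le_rfl
    rw [wt, hMpM] at h; exact h
  have hN1N : N.filter (fun s : Seg => s.1 ≤ 1 ∧ 1 ≤ s.2) = N1 := by
    apply Multiset.filter_congr
    intro s hs
    obtain ⟨h1, h2, h3⟩ := hN.1 s hs
    omega
  have hN1card : Multiset.card N1 = q + 1 := by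
    have h := hN.2 1 le_rfl hq1
    rw [wt, hN1N] at h; exact h
  have hAcard : Multiset.card A = p + q + 1 := by
    simp [hAdef, hMpcard]; omega
  have hBcard : Multiset.card B = p + q + 1 := by
    simp [hBdef, hN1card]; omega
  have hlA : (lA : Multiset ℕ) = A := by
    rw [hlAdef, Multiset.coe_reverse, Multiset.sort_eq]
  have hlB : (lB : Multiset ℕ) = B := by
    rw [hlBdef, Multiset.sort_eq]
  have hlAlen : lA.length = p + q + 1 := by
    rw [hlAdef, List.length_reverse, Multiset.length_sort, hAcard]
  have hlBlen : lB.length = p + q + 1 := by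
    rw [hlBdef, Multiset.length_sort, hBcard]
  have hfst : ((Z.map Prod.fst : List ℕ) : Multiset ℕ) = A := by
    rw [hZdef, List.map_fst_zip (by omega : lA.length ≤ lB.length), hlA]
  have hsnd : ((Z.map Prod.snd : List ℕ) : Multiset ℕ) = B := by
    rw [hZdef, List.map_snd_zip (by omega : lB.length ≤ lA.length), hlB]
  -- bounds on elements of A and B
  have hA : ∀ a ∈ A, 1 ≤ a ∧ a ≤ p := by
    intro a ha
    rw [hAdef, Multiset.mem_add] at ha
    rcases ha with ha | ha
    · obtain ⟨t, ht, rfl⟩ := Multiset.mem_map.1 ha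
      rw [hMpdef, Multiset.mem_filter] at ht
      obtain ⟨h1, h2, h3⟩ := hM.1 t ht.1
      omega
    · rw [Multiset.eq_of_mem_replicate ha]; omega
  have hB : ∀ b ∈ B, 1 ≤ b ∧ b ≤ q := by
    intro b hb
    rw [hBdef, Multiset.mem_add] at hb
    rcases hb with hb | hb
    · obtain ⟨t, ht, rfl⟩ := Multiset.mem_map.1 hb
      rw [hN1def, Multiset.mem_filter] at ht
      obtain ⟨h1, h2, h3⟩ := hN.1 t ht.1
      omega
    · rw [Multiset.eq_of_mem_replicate hb]; omega
  have hZmem : ∀ a b, (a, b) ∈ Z → (1 ≤ a ∧ a ≤ p) ∧ (1 ≤ b ∧ b ≤ q) := by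
    intro a b hab
    obtain ⟨h1, h2⟩ := List.of_mem_zip hab
    exact ⟨hA a (by rw [← hlA]; exact Multiset.mem_coe.2 h1),
           hB b (by rw [← hlB]; exact Multiset.mem_coe.2 h2)⟩
  rw [hconcat]
  constructor
  · -- membership bounds
    intro s hs
    rw [Multiset.mem_add, Multiset.mem_add] at hs
    rcases hs with (hs | hs) | hs
    · rw [Multiset.mem_filter] at hs
      obtain ⟨h1, h2, h3⟩ := hM.1 s hs.1
      omega
    · obtain ⟨t, ht, rfl⟩ := Multiset.mem_map.1 hs
      rw [Multiset.mem_filter] at ht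
      obtain ⟨h1, h2, h3⟩ := hN.1 t ht.1
      simp only []
      omega
    · rw [Multiset.mem_coe, List.mem_map] at hs
      obtain ⟨⟨a, b⟩, hab, rfl⟩ := hs
      obtain ⟨⟨h1, h2⟩, h3, h4⟩ := hZmem a b hab
      simp only []
      omega
  · -- weights
    intro k hk1 hk2
    rw [wt_add', wt_add']
    have hGwt : wt (↑(Z.map (fun x : ℕ × ℕ => (x.1, x.2 + p))) : Multiset Seg) k
        = Multiset.countP (fun x : ℕ × ℕ => x.1 ≤ k ∧ k ≤ x.2 + p) (↑Z : Multiset (ℕ × ℕ)) := by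
      rw [wt_eq_countP, ← Multiset.map_coe, Multiset.countP_map,
        ← Multiset.countP_eq_card_filter]
    rcases le_or_gt k p with hkp | hkp
    · -- k ≤ p
      have hS : wt ((N.filter (fun s => 1 < s.1)).map (fun s => (s.1 + p, s.2 + p))) k = 0 := by
        rw [wt_eq_countP, Multiset.countP_map, ← Multiset.countP_eq_card_filter,
          Multiset.countP_eq_zero]
        intro t ht
        rw [Multiset.mem_filter] at ht
        simp only [not_and]
        intro h
        omega
      rw [hS, hGwt]
      have hG2 : Multiset.countP (fun x : ℕ × ℕ => x.1 ≤ k ∧ k ≤ x.2 + p) (↑Z : Multiset (ℕ × ℕ))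
          = Multiset.countP (fun x : ℕ × ℕ => x.1 ≤ k) (↑Z : Multiset (ℕ × ℕ)) := by
        apply Multiset.countP_congr rfl
        rintro ⟨a, b⟩ hab
        obtain ⟨⟨h1, h2⟩, h3, h4⟩ := hZmem a b (Multiset.mem_coe.1 hab)
        simp only [eq_iff_iff]
        omega
      rw [hG2]
      have hG3 : Multiset.countP (fun x : ℕ × ℕ => x.1 ≤ k) (↑Z : Multiset (ℕ × ℕ))
          = Multiset.countP (fun a : ℕ => a ≤ k) A := by
        rw [← hfst, ← Multiset.map_coe, Multiset.countP_map, ← Multiset.countP_eq_card_filter]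
      rw [hG3, hAdef, Multiset.countP_add, Multiset.countP_map, ← Multiset.countP_eq_card_filter]
      have hrep : Multiset.countP (fun a : ℕ => a ≤ k) (Multiset.replicate q 1) = q := by
        rw [Multiset.countP_eq_card.2 (fun a ha => by
          rw [Multiset.eq_of_mem_replicate ha]; omega)]
        simp
      rw [hrep]
      -- now : wt F k + (countP (·.1 ≤ k) Mp + q) = p + q + 1
      have hMsplit : M.filter (fun s : Seg => s.2 < p) + Mp = M := by
        rw [hMpdef]
        have : M.filter (fun s : Seg => s.2 = p) = M.filter (fun s : Seg => ¬ s.2 < p) := by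
          apply Multiset.filter_congr
          intro s hs
          obtain ⟨h1, h2, h3⟩ := hM.1 s hs
          omega
        rw [this, Multiset.filter_add_not]
      have hwtM := hM.2 k hk1 hkp
      rw [wt_eq_countP] at hwtM
      conv at hwtM => rw [← hMsplit]
      rw [Multiset.countP_add] at hwtM
      have hMpwt : Multiset.countP (fun s : Seg => s.1 ≤ k ∧ k ≤ s.2) Mp
          = Multiset.countP (fun s : Seg => s.1 ≤ k) Mp := by
        apply Multiset.countP_congr rfl
        intro s hs
        rw [hMpdef, Multiset.mem_filter] at hs
        simp only [eq_iff_iff]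
        omega
      rw [hMpwt] at hwtM
      rw [wt_eq_countP]
      have hbridge : Multiset.countP (fun a : ℕ × ℕ => a.1 ≤ k) Mp
          = Multiset.countP (fun s : Seg => s.1 ≤ k) Mp := rfl
      omega
    · -- p < k
      have hF : wt (M.filter (fun s : Seg => s.2 < p)) k = 0 := by
        rw [wt_eq_countP, Multiset.countP_eq_zero]
        intro t ht
        rw [Multiset.mem_filter] at ht
        simp only [not_and]
        intro h
        omega
      rw [hF, hGwt]
      have hG2 : Multiset.countP (fun x : ℕ × ℕ => x.1 ≤ k ∧ k ≤ x.2 + p) (↑Z : Multiset (ℕ × ℕ))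
          = Multiset.countP (fun x : ℕ × ℕ => k ≤ x.2 + p) (↑Z : Multiset (ℕ × ℕ)) := by
        apply Multiset.countP_congr rfl
        rintro ⟨a, b⟩ hab
        obtain ⟨⟨h1, h2⟩, h3, h4⟩ := hZmem a b (Multiset.mem_coe.1 hab)
        simp only [eq_iff_iff]
        omega
      rw [hG2]
      have hG3 : Multiset.countP (fun x : ℕ × ℕ => k ≤ x.2 + p) (↑Z : Multiset (ℕ × ℕ))
          = Multiset.countP (fun b : ℕ => k ≤ b + p) B := by
        rw [← hsnd, ← Multiset.map_coe, Multiset.countP_map, ← Multiset.countP_eq_card_filter]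
      rw [hG3, hBdef, Multiset.countP_add, Multiset.countP_map, ← Multiset.countP_eq_card_filter]
      have hrep : Multiset.countP (fun b : ℕ => k ≤ b + p) (Multiset.replicate p q) = p := by
        rw [Multiset.countP_eq_card.2 (fun a ha => by
          rw [Multiset.eq_of_mem_replicate ha]; omega)]
        simp
      rw [hrep]
      -- weight of N at k - p
      have hNsplit : N.filter (fun s : Seg => 1 < s.1) + N1 = N := by
        rw [hN1def]
        have : N.filter (fun s : Seg => s.1 = 1) = N.filter (fun s : Seg => ¬ 1 < s.1) := by
          apply Multiset.filter_congr
          intro s hs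
          obtain ⟨h1, h2, h3⟩ := hN.1 s hs
          omega
        rw [this, Multiset.filter_add_not]
      have hwtN := hN.2 (k - p) (by omega) (by omega)
      rw [wt_eq_countP] at hwtN
      conv at hwtN => rw [← hNsplit]
      rw [Multiset.countP_add] at hwtN
      have hN1wt : Multiset.countP (fun s : Seg => s.1 ≤ k - p ∧ k - p ≤ s.2) N1
          = Multiset.countP (fun s : Seg => k ≤ s.2 + p) N1 := by
        apply Multiset.countP_congr rfl
        intro s hs
        rw [hN1def, Multiset.mem_filter] at hs
        simp only [eq_iff_iff]
        omega
      have hN'wt : Multiset.countP (fun s : Seg => s.1 ≤ k - p ∧ k - p ≤ s.2)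
            (N.filter (fun s : Seg => 1 < s.1))
          = wt ((N.filter (fun s => 1 < s.1)).map (fun s => (s.1 + p, s.2 + p))) k := by
        rw [wt_eq_countP, Multiset.countP_map, ← Multiset.countP_eq_card_filter]
        apply Multiset.countP_congr rfl
        intro s hs
        rw [Multiset.mem_filter] at hs
        simp only [eq_iff_iff]
        omega
      rw [hN1wt, hN'wt] at hwtN
      have hbridge : Multiset.countP (fun a : ℕ × ℕ => k ≤ a.2 + p) N1
          = Multiset.countP (fun s : Seg => k ≤ s.2 + p) N1 := rfl
      omega
end

section
/- In a concatenation M * N of multisegments M ∈ R_p and N ∈ R_q, the segments of M * N containing both p and p+1 are linearly ordered by inclusion. -/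
private lemma zip_chain {l1 l2 : List ℕ} (h1 : l1.Pairwise (· ≥ ·)) (h2 : l2.Pairwise (· ≤ ·))
    {a b : ℕ × ℕ} (ha : a ∈ l1.zip l2) (hb : b ∈ l1.zip l2) :
    (b.1 ≤ a.1 ∧ a.2 ≤ b.2) ∨ (a.1 ≤ b.1 ∧ b.2 ≤ a.2) := by
  rw [List.mem_iff_getElem] at ha hb
  obtain ⟨i, hi, rfl⟩ := ha
  obtain ⟨j, hj, rfl⟩ := hb
  rw [List.length_zip, lt_min_iff] at hi hj
  have key : ∀ i j : ℕ, ∀ hi1 : i < l1.length, ∀ hi2 : i < l2.length,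
      ∀ hj1 : j < l1.length, ∀ hj2 : j < l2.length, i ≤ j →
      l1[j] ≤ l1[i] ∧ l2[i] ≤ l2[j] := by
    intro i j hi1 hi2 hj1 hj2 hij
    rcases eq_or_lt_of_le hij with rfl | hlt
    · exact ⟨le_refl _, le_refl _⟩
    · exact ⟨List.pairwise_iff_getElem.mp h1 i j hi1 hj1 hlt,
        List.pairwise_iff_getElem.mp h2 i j hi2 hj2 hlt⟩
  rcases le_total i j with hij | hij
  · left
    have := key i j hi.1 hi.2 hj.1 hj.2 hij
    simpa using this
  · right
    have := key j i hj.1 hj.2 hi.1 hi.2 hij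
    simpa using this

/-- in a concatenation `M * N` with `M ∈ R_p`, `N ∈ R_q`, the
segments containing both `p` and `p+1` are linearly ordered by inclusion. -/
theorem concat_middle_segments_chain (p q : ℕ) (hp : 1 ≤ p) (hq : 1 ≤ q)
    (M N : Multiset Seg) (hM : InR p M) (hN : InR q N) :
    ∀ A ∈ concatMS p q M N, ∀ B ∈ concatMS p q M N,
      A.1 ≤ p → p + 1 ≤ A.2 → B.1 ≤ p → p + 1 ≤ B.2 →
      (B.1 ≤ A.1 ∧ A.2 ≤ B.2) ∨ (A.1 ≤ B.1 ∧ B.2 ≤ A.2) := by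
  have hp' : p ≠ 0 := by omega
  have hq' : q ≠ 0 := by omega
  intro A hA B hB hA1 hA2 hB1 hB2
  set l1 := ((((M.filter (fun s : Seg => s.2 = p)).map Prod.fst
      + Multiset.replicate q 1).sort (· ≤ ·)).reverse) with hl1
  set l2 := ((((N.filter (fun s : Seg => s.1 = 1)).map Prod.snd
      + Multiset.replicate p q).sort (· ≤ ·))) with hl2
  have h1 : l1.Pairwise (· ≥ ·) := by
    exact List.pairwise_reverse.mpr ((Multiset.pairwise_sort _ (· ≤ ·)).imp fun h => h)
  have h2 : l2.Pairwise (· ≤ ·) := Multiset.pairwise_sort _ _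
  have hmem : ∀ C : Seg, C ∈ concatMS p q M N → C.1 ≤ p → p + 1 ≤ C.2 →
      ∃ x ∈ l1.zip l2, C = (x.1, x.2 + p) := by
    intro C hC hC1 hC2
    rw [concatMS, if_neg hp', if_neg hq'] at hC
    rcases Multiset.mem_add.mp hC with hC' | hC'
    · rcases Multiset.mem_add.mp hC' with hC'' | hC''
      · have := Multiset.of_mem_filter hC''
        omega
      · obtain ⟨s, hs, heq⟩ := Multiset.mem_map.mp hC''
        have := Multiset.of_mem_filter hs
        have h1s : C.1 = s.1 + p := by rw [← heq]
        omega
    · rw [Multiset.mem_coe, List.mem_map] at hC'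
      obtain ⟨x, hx, heq⟩ := hC'
      exact ⟨x, hx, heq.symm⟩
  obtain ⟨x, hx, hxeq⟩ := hmem A hA hA1 hA2
  obtain ⟨y, hy, hyeq⟩ := hmem B hB hB1 hB2
  subst hxeq hyeq
  rcases zip_chain h1 h2 hx hy with ⟨h1', h2'⟩ | ⟨h1', h2'⟩
  · left; exact ⟨h1', by omega⟩
  · right; exact ⟨h1', by omega⟩
end

section
/- The concatenation map sends R_p × R_q injectively into the set of multisegments in R_{p+q} having a special full column at p. -/
/-- The `k`-th column of `M` is full: the number of segments of `M` containing
both `k` and `k+1` equals `min (w_k, w_{k+1})`. -/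
def fullAt (M : Multiset Seg) (k : ℕ) : Prop :=
  (M.filter (fun s : Seg => s.1 ≤ k ∧ k + 1 ≤ s.2)).card = min (wt M k) (wt M (k + 1))

/-- `M` has a special full column at `k`: the `k`-th column is full and any
two segments of `M` containing the column `k` are comparable by inclusion. -/
def specialFullAt (M : Multiset Seg) (k : ℕ) : Prop :=
  fullAt M k ∧ ∀ A ∈ M, ∀ B ∈ M, (A.1 ≤ k ∧ k + 1 ≤ A.2) → (B.1 ≤ k ∧ k + 1 ≤ B.2) →
    ((B.1 ≤ A.1 ∧ A.2 ≤ B.2) ∨ (A.1 ≤ B.1 ∧ B.2 ≤ A.2))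

namespace ConcatAux

def S1 (p q : ℕ) (M : Multiset Seg) : Multiset ℕ :=
  (M.filter (fun s : Seg => s.2 = p)).map Prod.fst + Multiset.replicate q 1

def S2 (p q : ℕ) (N : Multiset Seg) : Multiset ℕ :=
  (N.filter (fun s : Seg => s.1 = 1)).map Prod.snd + Multiset.replicate p q

def L1 (p q : ℕ) (M : Multiset Seg) : List ℕ := ((S1 p q M).sort (· ≤ ·)).reverse

def L2 (p q : ℕ) (N : Multiset Seg) : List ℕ := (S2 p q N).sort (· ≤ ·)

def G (p q : ℕ) (M N : Multiset Seg) : List Seg :=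
  ((L1 p q M).zip (L2 p q N)).map (fun x => (x.1, x.2 + p))

lemma concatMS_eq (p q : ℕ) (M N : Multiset Seg) (hp : p ≠ 0) (hq : q ≠ 0) :
    concatMS p q M N = M.filter (fun s => s.2 < p)
      + (N.filter (fun s => 1 < s.1)).map (fun s => (s.1 + p, s.2 + p))
      + ↑(G p q M N) := by
  unfold concatMS G L1 L2 S1 S2
  rw [if_neg hp, if_neg hq]

lemma filterE_eq (p : ℕ) (M : Multiset Seg) (hp : 1 ≤ p) (hM : InR p M) :
    M.filter (fun s : Seg => s.1 ≤ p ∧ p ≤ s.2) = M.filter (fun s : Seg => s.2 = p) := by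
  apply Multiset.filter_congr
  intro s hs
  obtain ⟨h1, h2, h3⟩ := hM.1 s hs
  constructor
  · rintro ⟨_, h⟩; exact le_antisymm h3 h
  · rintro h; exact ⟨h2.trans h.le, h.ge⟩

lemma cardE (p : ℕ) (M : Multiset Seg) (hp : 1 ≤ p) (hM : InR p M) :
    Multiset.card (M.filter (fun s : Seg => s.2 = p)) = p + 1 := by
  rw [← filterE_eq p M hp hM]
  exact hM.2 p hp le_rfl

lemma filterB_eq (q : ℕ) (N : Multiset Seg) (hq : 1 ≤ q) (hN : InR q N) :
    N.filter (fun s : Seg => s.1 ≤ 1 ∧ 1 ≤ s.2) = N.filter (fun s : Seg => s.1 = 1) := by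
  apply Multiset.filter_congr
  intro s hs
  obtain ⟨h1, h2, h3⟩ := hN.1 s hs
  constructor
  · rintro ⟨h, _⟩; exact le_antisymm h h1
  · rintro h; exact ⟨h.le, h ▸ h2⟩

lemma cardB (q : ℕ) (N : Multiset Seg) (hq : 1 ≤ q) (hN : InR q N) :
    Multiset.card (N.filter (fun s : Seg => s.1 = 1)) = q + 1 := by
  rw [← filterB_eq q N hq hN]
  exact hN.2 1 le_rfl hq

lemma lengthL1 (p q : ℕ) (M : Multiset Seg) (hp : 1 ≤ p) (hM : InR p M) :
    (L1 p q M).length = p + q + 1 := by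
  unfold L1 S1
  rw [List.length_reverse, Multiset.length_sort, Multiset.card_add, Multiset.card_map,
    Multiset.card_replicate, cardE p M hp hM]
  omega

lemma lengthL2 (p q : ℕ) (N : Multiset Seg) (hq : 1 ≤ q) (hN : InR q N) :
    (L2 p q N).length = p + q + 1 := by
  unfold L2 S2
  rw [Multiset.length_sort, Multiset.card_add, Multiset.card_map,
    Multiset.card_replicate, cardB q N hq hN]
  omega

lemma coeL1 (p q : ℕ) (M : Multiset Seg) : (↑(L1 p q M) : Multiset ℕ) = S1 p q M := by
  unfold L1
  rw [Multiset.coe_reverse, Multiset.sort_eq]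

lemma coeL2 (p q : ℕ) (N : Multiset Seg) : (↑(L2 p q N) : Multiset ℕ) = S2 p q N := by
  unfold L2
  rw [Multiset.sort_eq]

lemma mem_S1 (p q : ℕ) (M : Multiset Seg) (hp : 1 ≤ p) (hM : InR p M) :
    ∀ a ∈ S1 p q M, 1 ≤ a ∧ a ≤ p := by
  intro a ha
  rw [S1, Multiset.mem_add] at ha
  rcases ha with ha | ha
  · obtain ⟨s, hs, rfl⟩ := Multiset.mem_map.mp ha
    rw [Multiset.mem_filter] at hs
    obtain ⟨h1, h2, h3⟩ := hM.1 s hs.1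
    exact ⟨h1, h2.trans (hs.2 ▸ le_rfl)⟩
  · rw [Multiset.eq_of_mem_replicate ha]
    exact ⟨le_rfl, hp⟩

lemma mem_S2 (p q : ℕ) (N : Multiset Seg) (hq : 1 ≤ q) (hN : InR q N) :
    ∀ b ∈ S2 p q N, 1 ≤ b ∧ b ≤ q := by
  intro b hb
  rw [S2, Multiset.mem_add] at hb
  rcases hb with hb | hb
  · obtain ⟨s, hs, rfl⟩ := Multiset.mem_map.mp hb
    rw [Multiset.mem_filter] at hs
    obtain ⟨h1, h2, h3⟩ := hN.1 s hs.1
    exact ⟨h1.trans h2, h3⟩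
  · rw [Multiset.eq_of_mem_replicate hb]
    exact ⟨hq, le_rfl⟩

lemma mem_G (p q : ℕ) (M N : Multiset Seg) (hp : 1 ≤ p) (hq : 1 ≤ q)
    (hM : InR p M) (hN : InR q N) :
    ∀ s ∈ G p q M N, (1 ≤ s.1 ∧ s.1 ≤ p) ∧ (1 ≤ s.2 - p ∧ s.2 - p ≤ q) ∧ p < s.2 := by
  intro s hs
  unfold G at hs
  obtain ⟨x, hx, rfl⟩ := List.mem_map.mp hs
  obtain ⟨h1, h2⟩ := List.of_mem_zip hx
  have ha : x.1 ∈ S1 p q M := by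
    rw [← coeL1 p q M]; exact h1
  have hb : x.2 ∈ S2 p q N := by
    rw [← coeL2 p q N]; exact h2
  have := mem_S1 p q M hp hM x.1 ha
  have := mem_S2 p q N hq hN x.2 hb
  simp only [Nat.add_sub_cancel]
  omega

lemma card_filter_zip_fst (P : ℕ → Prop) [DecidablePred P] (l1 l2 : List ℕ)
    (h : l1.length ≤ l2.length) :
    Multiset.card (Multiset.filter (fun x : ℕ × ℕ => P x.1) ↑(l1.zip l2))
      = Multiset.card (Multiset.filter P (↑l1 : Multiset ℕ)) := by
  conv_rhs => rw [← List.map_fst_zip h]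
  rw [← Multiset.map_coe, Multiset.filter_map, Multiset.card_map]
  rfl

lemma card_filter_zip_snd (P : ℕ → Prop) [DecidablePred P] (l1 l2 : List ℕ)
    (h : l2.length ≤ l1.length) :
    Multiset.card (Multiset.filter (fun x : ℕ × ℕ => P x.2) ↑(l1.zip l2))
      = Multiset.card (Multiset.filter P (↑l2 : Multiset ℕ)) := by
  conv_rhs => rw [← List.map_snd_zip h]
  rw [← Multiset.map_coe, Multiset.filter_map, Multiset.card_map]
  rfl

lemma splitM (p : ℕ) (M : Multiset Seg) (hM : InR p M) :
    M.filter (fun s : Seg => s.2 < p) + M.filter (fun s : Seg => s.2 = p) = M := by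
  conv_rhs => rw [← Multiset.filter_add_not (fun s : Seg => s.2 < p) M]
  congr 1
  apply Multiset.filter_congr
  intro s hs
  have h3 := (hM.1 s hs).2.2
  omega

lemma splitN (q : ℕ) (N : Multiset Seg) (hN : InR q N) :
    N.filter (fun s : Seg => 1 < s.1) + N.filter (fun s : Seg => s.1 = 1) = N := by
  conv_rhs => rw [← Multiset.filter_add_not (fun s : Seg => 1 < s.1) N]
  congr 1
  apply Multiset.filter_congr
  intro s hs
  have h1 := (hN.1 s hs).1
  omega

lemma wt_concat (p q : ℕ) (M N : Multiset Seg) (hp : 1 ≤ p) (hq : 1 ≤ q)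
    (hM : InR p M) (hN : InR q N) (k : ℕ) (hk1 : 1 ≤ k) (hk2 : k ≤ p + q) :
    wt (concatMS p q M N) k = p + q + 1 := by
  rw [concatMS_eq p q M N (by omega) (by omega), wt, Multiset.filter_add, Multiset.filter_add,
    Multiset.card_add, Multiset.card_add]
  have hlen : (L2 p q N).length ≤ (L1 p q M).length := by
    rw [lengthL1 p q M hp hM, lengthL2 p q N hq hN]
  have hlen' : (L1 p q M).length ≤ (L2 p q N).length := by
    rw [lengthL1 p q M hp hM, lengthL2 p q N hq hN]
  by_cases hkp : k ≤ p
  · -- left part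
    have hB : Multiset.card (Multiset.filter (fun s : Seg => s.1 ≤ k ∧ k ≤ s.2)
        ((N.filter (fun s => 1 < s.1)).map (fun s => (s.1 + p, s.2 + p)))) = 0 := by
      rw [Multiset.card_eq_zero, Multiset.filter_eq_nil]
      intro a ha
      obtain ⟨t, ht, rfl⟩ := Multiset.mem_map.mp ha
      have h1 := (Multiset.mem_filter.mp ht).2
      intro h
      have h2 : t.1 + p ≤ k := h.1
      omega
    have hG : Multiset.card (Multiset.filter (fun s : Seg => s.1 ≤ k ∧ k ≤ s.2)
        (↑(G p q M N) : Multiset Seg))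
        = Multiset.card (Multiset.filter (fun s : Seg => s.1 ≤ k ∧ k ≤ s.2)
            (M.filter (fun s : Seg => s.2 = p))) + q := by
      rw [Multiset.filter_congr (q := fun s : Seg => s.1 ≤ k) (by
        intro s hs
        have := mem_G p q M N hp hq hM hN s hs
        constructor
        · exact fun h => h.1
        · exact fun h => ⟨h, by omega⟩)]
      unfold G
      rw [← Multiset.map_coe, Multiset.filter_map, Multiset.card_map]
      have e1 : Multiset.card (Multiset.filter ((fun s : Seg => s.1 ≤ k) ∘ fun x : ℕ × ℕ => (x.1, x.2 + p)) ↑((L1 p q M).zip (L2 p q N)))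
          = Multiset.card (Multiset.filter (fun a : ℕ => a ≤ k) (↑(L1 p q M) : Multiset ℕ)) :=
        card_filter_zip_fst (fun a => a ≤ k) _ _ hlen'
      rw [e1, coeL1, S1, Multiset.filter_add, Multiset.card_add,
        Multiset.filter_map, Multiset.card_map]
      have e2 : Multiset.filter (fun a : ℕ => a ≤ k) (Multiset.replicate q 1) = Multiset.replicate q 1 :=
        Multiset.filter_eq_self.mpr (fun a ha => by rw [Multiset.eq_of_mem_replicate ha]; exact hk1)
      rw [e2, Multiset.card_replicate]
      have e3 : Multiset.filter ((fun a : ℕ => a ≤ k) ∘ Prod.fst) (M.filter (fun s : Seg => s.2 = p))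
          = Multiset.filter (fun s : Seg => s.1 ≤ k ∧ k ≤ s.2) (M.filter (fun s : Seg => s.2 = p)) := by
        apply Multiset.filter_congr
        intro s hs
        have hs2 := (Multiset.mem_filter.mp hs).2
        show s.1 ≤ k ↔ _
        omega
      rw [e3]
    rw [hB, hG]
    have hwtM : wt M k = p + 1 := hM.2 k hk1 hkp
    rw [wt, ← splitM p M hM, Multiset.filter_add, Multiset.card_add] at hwtM
    omega
  · -- right part, k > p
    push_neg at hkp
    have hA : Multiset.card (Multiset.filter (fun s : Seg => s.1 ≤ k ∧ k ≤ s.2)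
        (M.filter (fun s : Seg => s.2 < p))) = 0 := by
      rw [Multiset.card_eq_zero, Multiset.filter_eq_nil]
      intro a ha
      have h1 := (Multiset.mem_filter.mp ha).2
      intro h
      have h2 : k ≤ a.2 := h.2
      omega
    have hB : Multiset.card (Multiset.filter (fun s : Seg => s.1 ≤ k ∧ k ≤ s.2)
        ((N.filter (fun s => 1 < s.1)).map (fun s => (s.1 + p, s.2 + p))))
        = Multiset.card (Multiset.filter (fun t : Seg => t.1 ≤ k - p ∧ k - p ≤ t.2)
            (N.filter (fun s : Seg => 1 < s.1))) := by
      rw [Multiset.filter_map, Multiset.card_map]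
      congr 1
      apply Multiset.filter_congr
      intro s hs
      show (s.1 + p ≤ k ∧ k ≤ s.2 + p) ↔ _
      omega
    have hG : Multiset.card (Multiset.filter (fun s : Seg => s.1 ≤ k ∧ k ≤ s.2)
        (↑(G p q M N) : Multiset Seg))
        = Multiset.card (Multiset.filter (fun t : Seg => t.1 ≤ k - p ∧ k - p ≤ t.2)
            (N.filter (fun s : Seg => s.1 = 1))) + p := by
      rw [Multiset.filter_congr (q := fun s : Seg => k ≤ s.2) (by
        intro s hs
        have := mem_G p q M N hp hq hM hN s hs
        constructor
        · exact fun h => h.2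
        · exact fun h => ⟨by omega, h⟩)]
      unfold G
      rw [← Multiset.map_coe, Multiset.filter_map, Multiset.card_map]
      have e1 : Multiset.card (Multiset.filter ((fun s : Seg => k ≤ s.2) ∘ fun x : ℕ × ℕ => (x.1, x.2 + p)) ↑((L1 p q M).zip (L2 p q N)))
          = Multiset.card (Multiset.filter (fun b : ℕ => k ≤ b + p) (↑(L2 p q N) : Multiset ℕ)) :=
        card_filter_zip_snd (fun b => k ≤ b + p) _ _ hlen
      rw [e1, coeL2, S2, Multiset.filter_add, Multiset.card_add,
        Multiset.filter_map, Multiset.card_map]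
      have e2 : Multiset.filter (fun b : ℕ => k ≤ b + p) (Multiset.replicate p q) = Multiset.replicate p q :=
        Multiset.filter_eq_self.mpr (fun a ha => by rw [Multiset.eq_of_mem_replicate ha]; omega)
      rw [e2, Multiset.card_replicate]
      have e3 : Multiset.filter ((fun b : ℕ => k ≤ b + p) ∘ Prod.snd) (N.filter (fun s : Seg => s.1 = 1))
          = Multiset.filter (fun t : Seg => t.1 ≤ k - p ∧ k - p ≤ t.2) (N.filter (fun s : Seg => s.1 = 1)) := by
        apply Multiset.filter_congr
        intro s hs
        have hs2 := (Multiset.mem_filter.mp hs).2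
        show k ≤ s.2 + p ↔ _
        omega
      rw [e3]
    rw [hA, hB, hG]
    have hwtN : wt N (k - p) = q + 1 := hN.2 (k - p) (by omega) (by omega)
    rw [wt, ← splitN q N hN, Multiset.filter_add, Multiset.card_add] at hwtN
    omega

lemma mem_concat (p q : ℕ) (M N : Multiset Seg) (hp : 1 ≤ p) (hq : 1 ≤ q)
    (hM : InR p M) (hN : InR q N) :
    ∀ s ∈ concatMS p q M N, 1 ≤ s.1 ∧ s.1 ≤ s.2 ∧ s.2 ≤ p + q := by
  intro s hs
  rw [concatMS_eq p q M N (by omega) (by omega)] at hs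
  rw [Multiset.mem_add, Multiset.mem_add] at hs
  rcases hs with (hs | hs) | hs
  · have h1 := (Multiset.mem_filter.mp hs).1
    have := hM.1 s h1
    omega
  · obtain ⟨t, ht, rfl⟩ := Multiset.mem_map.mp hs
    have := hN.1 t (Multiset.mem_filter.mp ht).1
    simp only
    omega
  · have := mem_G p q M N hp hq hM hN s hs
    omega

lemma pairwise_G (p q : ℕ) (M N : Multiset Seg) :
    (G p q M N).Pairwise
      (fun A B : Seg => (B.1 ≤ A.1 ∧ A.2 ≤ B.2) ∨ (A.1 ≤ B.1 ∧ B.2 ≤ A.2)) := by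
  unfold G
  apply List.Pairwise.map (R := fun x y : ℕ × ℕ => y.1 ≤ x.1 ∧ x.2 ≤ y.2)
  · intro a b hab
    exact Or.inl ⟨hab.1, by exact Nat.add_le_add_right hab.2 p⟩
  · have hs1 : (L1 p q M).Pairwise (fun a b : ℕ => b ≤ a) := by
      unfold L1
      rw [List.pairwise_reverse]
      exact Multiset.pairwise_sort _ _
    have hs2 : (L2 p q N).Pairwise (fun a b : ℕ => a ≤ b) := Multiset.pairwise_sort _ _
    rw [List.pairwise_iff_getElem] at hs1 hs2 ⊢
    intro i j hi hj hij
    have hi1 : i < (L1 p q M).length := lt_of_lt_of_le hi (by rw [List.length_zip]; omega)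
    have hj1 : j < (L1 p q M).length := lt_of_lt_of_le hj (by rw [List.length_zip]; omega)
    have hi2 : i < (L2 p q N).length := lt_of_lt_of_le hi (by rw [List.length_zip]; omega)
    have hj2 : j < (L2 p q N).length := lt_of_lt_of_le hj (by rw [List.length_zip]; omega)
    rw [List.getElem_zip, List.getElem_zip]
    exact ⟨hs1 i j hi1 hj1 hij, hs2 i j hi2 hj2 hij⟩

lemma special_concat (p q : ℕ) (M N : Multiset Seg) (hp : 1 ≤ p) (hq : 1 ≤ q)
    (hM : InR p M) (hN : InR q N) :
    specialFullAt (concatMS p q M N) p := by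
  have hmemG : ∀ s ∈ (↑(G p q M N) : Multiset Seg), s.1 ≤ p ∧ p + 1 ≤ s.2 := by
    intro s hs
    have := mem_G p q M N hp hq hM hN s hs
    omega
  have hfilt : Multiset.filter (fun s : Seg => s.1 ≤ p ∧ p + 1 ≤ s.2) (concatMS p q M N)
      = ↑(G p q M N) := by
    rw [concatMS_eq p q M N (by omega) (by omega), Multiset.filter_add, Multiset.filter_add]
    rw [Multiset.filter_eq_nil.mpr (fun a ha => by
      have := (Multiset.mem_filter.mp ha).2
      intro h; omega)]
    rw [Multiset.filter_eq_nil.mpr (fun a ha => by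
      obtain ⟨t, ht, rfl⟩ := Multiset.mem_map.mp ha
      have := (Multiset.mem_filter.mp ht).2
      intro h
      have h2 : t.1 + p ≤ p := h.1
      omega)]
    rw [Multiset.filter_eq_self.mpr hmemG]
    simp
  constructor
  · -- fullAt
    rw [fullAt, hfilt, Multiset.coe_card]
    have hGlen : (G p q M N).length = p + q + 1 := by
      unfold G
      rw [List.length_map, List.length_zip, lengthL1 p q M hp hM, lengthL2 p q N hq hN]
      simp
    rw [hGlen, wt_concat p q M N hp hq hM hN p hp (by omega),
      wt_concat p q M N hp hq hM hN (p + 1) (by omega) (by omega)]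
    simp
  · intro A hA B hB hAp hBp
    have hA' : A ∈ (↑(G p q M N) : Multiset Seg) := by
      rw [← hfilt]
      exact Multiset.mem_filter.mpr ⟨hA, hAp⟩
    have hB' : B ∈ (↑(G p q M N) : Multiset Seg) := by
      rw [← hfilt]
      exact Multiset.mem_filter.mpr ⟨hB, hBp⟩
    rw [Multiset.mem_coe] at hA' hB'
    by_cases hab : A = B
    · subst hab
      exact Or.inl ⟨le_rfl, le_rfl⟩
    · have hsymm : Symmetric (fun A B : Seg => (B.1 ≤ A.1 ∧ A.2 ≤ B.2) ∨ (A.1 ≤ B.1 ∧ B.2 ≤ A.2)) := by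
        intro x y h
        tauto
      haveI : Std.Symm (fun A B : Seg => (B.1 ≤ A.1 ∧ A.2 ≤ B.2) ∨ (A.1 ≤ B.1 ∧ B.2 ≤ A.2)) :=
        ⟨fun a b h => hsymm h⟩
      exact (pairwise_G p q M N).forall hA' hB' hab

lemma filter_mid (p q : ℕ) (M N : Multiset Seg) (hp : 1 ≤ p) (hq : 1 ≤ q)
    (hM : InR p M) (hN : InR q N) :
    (concatMS p q M N).filter (fun s : Seg => s.1 ≤ p ∧ p < s.2) = ↑(G p q M N) := by
  rw [concatMS_eq p q M N (by omega) (by omega), Multiset.filter_add, Multiset.filter_add]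
  rw [Multiset.filter_eq_nil.mpr (fun a ha => by
    have := (Multiset.mem_filter.mp ha).2
    intro h; omega)]
  rw [Multiset.filter_eq_nil.mpr (fun a ha => by
    obtain ⟨t, ht, rfl⟩ := Multiset.mem_map.mp ha
    have := (Multiset.mem_filter.mp ht).2
    intro h
    have h2 : t.1 + p ≤ p := h.1
    omega)]
  rw [Multiset.filter_eq_self.mpr (fun s hs => by
    have := mem_G p q M N hp hq hM hN s hs
    omega)]
  simp

lemma mapG_fst (p q : ℕ) (M N : Multiset Seg) (hp : 1 ≤ p) (hq : 1 ≤ q)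
    (hM : InR p M) (hN : InR q N) :
    (↑(G p q M N) : Multiset Seg).map Prod.fst = S1 p q M := by
  unfold G
  rw [← Multiset.map_coe, Multiset.map_map]
  have : (Prod.fst ∘ fun x : ℕ × ℕ => (x.1, x.2 + p)) = Prod.fst := by
    funext x; rfl
  rw [this, Multiset.map_coe, List.map_fst_zip (l₁ := L1 p q M) (l₂ := L2 p q N) (by
    rw [lengthL1 p q M hp hM, lengthL2 p q N hq hN]), coeL1]

lemma mapG_snd (p q : ℕ) (M N : Multiset Seg) (hp : 1 ≤ p) (hq : 1 ≤ q)
    (hM : InR p M) (hN : InR q N) :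
    (↑(G p q M N) : Multiset Seg).map (fun s : Seg => s.2 - p) = S2 p q N := by
  unfold G
  rw [← Multiset.map_coe, Multiset.map_map]
  have : ((fun s : Seg => s.2 - p) ∘ fun x : ℕ × ℕ => (x.1, x.2 + p)) = Prod.snd := by
    funext x
    show x.2 + p - p = x.2
    omega
  rw [this, Multiset.map_coe, List.map_snd_zip (l₁ := L1 p q M) (l₂ := L2 p q N) (by
    rw [lengthL1 p q M hp hM, lengthL2 p q N hq hN]), coeL2]

lemma recoverM (p q : ℕ) (M N : Multiset Seg) (hp : 1 ≤ p) (hq : 1 ≤ q)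
    (hM : InR p M) (hN : InR q N) :
    M = (concatMS p q M N).filter (fun s : Seg => s.2 < p)
      + (((concatMS p q M N).filter (fun s : Seg => s.1 ≤ p ∧ p < s.2)).map Prod.fst
          - Multiset.replicate q 1).map (fun a : ℕ => (a, p)) := by
  have h1 : (concatMS p q M N).filter (fun s : Seg => s.2 < p)
      = M.filter (fun s : Seg => s.2 < p) := by
    rw [concatMS_eq p q M N (by omega) (by omega), Multiset.filter_add, Multiset.filter_add]
    have e1 : Multiset.filter (fun s : Seg => s.2 < p)
        ((N.filter (fun s => 1 < s.1)).map (fun s => (s.1 + p, s.2 + p))) = 0 :=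
      Multiset.filter_eq_nil.mpr (fun a ha => by
        obtain ⟨t, ht, rfl⟩ := Multiset.mem_map.mp ha
        show ¬ t.2 + p < p
        omega)
    have e2 : Multiset.filter (fun s : Seg => s.2 < p) (↑(G p q M N) : Multiset Seg) = 0 :=
      Multiset.filter_eq_nil.mpr (fun s hs => by
        have := mem_G p q M N hp hq hM hN s hs
        omega)
    have e3 : Multiset.filter (fun s : Seg => s.2 < p) (M.filter (fun s : Seg => s.2 < p))
        = M.filter (fun s : Seg => s.2 < p) :=
      Multiset.filter_eq_self.mpr (fun a ha => (Multiset.mem_filter.mp ha).2)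
    rw [e1, e2, e3]
    simp
  rw [h1, filter_mid p q M N hp hq hM hN, mapG_fst p q M N hp hq hM hN, S1]
  have e4 : (M.filter (fun s : Seg => s.2 = p)).map Prod.fst + Multiset.replicate q 1
      - Multiset.replicate q 1 = (M.filter (fun s : Seg => s.2 = p)).map Prod.fst := by
    simp
  rw [e4]
  have h2 : ((M.filter (fun s : Seg => s.2 = p)).map Prod.fst).map (fun a : ℕ => (a, p))
      = M.filter (fun s : Seg => s.2 = p) := by
    rw [Multiset.map_map]
    rw [Multiset.map_congr rfl (fun s hs => by
      have := (Multiset.mem_filter.mp hs).2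
      show (s.1, p) = s
      exact Prod.ext rfl this.symm)]
    · exact Multiset.map_id _
  rw [h2, splitM p M hM]

lemma recoverN (p q : ℕ) (M N : Multiset Seg) (hp : 1 ≤ p) (hq : 1 ≤ q)
    (hM : InR p M) (hN : InR q N) :
    N = ((concatMS p q M N).filter (fun s : Seg => p < s.1)).map (fun s : Seg => (s.1 - p, s.2 - p))
      + (((concatMS p q M N).filter (fun s : Seg => s.1 ≤ p ∧ p < s.2)).map (fun s : Seg => s.2 - p)
          - Multiset.replicate p q).map (fun b : ℕ => (1, b)) := by
  have h1 : (concatMS p q M N).filter (fun s : Seg => p < s.1)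
      = (N.filter (fun s : Seg => 1 < s.1)).map (fun s => (s.1 + p, s.2 + p)) := by
    rw [concatMS_eq p q M N (by omega) (by omega), Multiset.filter_add, Multiset.filter_add]
    have e1 : Multiset.filter (fun s : Seg => p < s.1) (M.filter (fun s : Seg => s.2 < p)) = 0 :=
      Multiset.filter_eq_nil.mpr (fun a ha => by
        have ha1 := (Multiset.mem_filter.mp ha).1
        have ha2 := (Multiset.mem_filter.mp ha).2
        have := hM.1 a ha1
        omega)
    have e2 : Multiset.filter (fun s : Seg => p < s.1) (↑(G p q M N) : Multiset Seg) = 0 :=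
      Multiset.filter_eq_nil.mpr (fun s hs => by
        have := mem_G p q M N hp hq hM hN s hs
        omega)
    have e3 : Multiset.filter (fun s : Seg => p < s.1)
        ((N.filter (fun s : Seg => 1 < s.1)).map (fun s => (s.1 + p, s.2 + p)))
        = (N.filter (fun s : Seg => 1 < s.1)).map (fun s => (s.1 + p, s.2 + p)) :=
      Multiset.filter_eq_self.mpr (fun a ha => by
        obtain ⟨t, ht, rfl⟩ := Multiset.mem_map.mp ha
        have := (Multiset.mem_filter.mp ht).2
        show p < t.1 + p
        omega)
    rw [e1, e2, e3]
    simp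
  have h2 : ((N.filter (fun s : Seg => 1 < s.1)).map (fun s => (s.1 + p, s.2 + p))).map
      (fun s : Seg => (s.1 - p, s.2 - p)) = N.filter (fun s : Seg => 1 < s.1) := by
    rw [Multiset.map_map]
    have : ((fun s : Seg => (s.1 - p, s.2 - p)) ∘ fun s : Seg => (s.1 + p, s.2 + p)) = id := by
      funext s
      show (s.1 + p - p, s.2 + p - p) = s
      refine Prod.ext ?_ ?_ <;> simp
    rw [this, Multiset.map_id]
  rw [h1, h2, filter_mid p q M N hp hq hM hN, mapG_snd p q M N hp hq hM hN, S2]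
  have e4 : (N.filter (fun s : Seg => s.1 = 1)).map Prod.snd + Multiset.replicate p q
      - Multiset.replicate p q = (N.filter (fun s : Seg => s.1 = 1)).map Prod.snd := by
    simp
  rw [e4]
  have h3 : ((N.filter (fun s : Seg => s.1 = 1)).map Prod.snd).map (fun b : ℕ => (1, b))
      = N.filter (fun s : Seg => s.1 = 1) := by
    rw [Multiset.map_map]
    rw [Multiset.map_congr rfl (fun s hs => by
      have := (Multiset.mem_filter.mp hs).2
      show ((1 : ℕ), s.2) = s
      exact Prod.ext this.symm rfl)]
    · exact Multiset.map_id _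
  rw [h3, splitN q N hN]

end ConcatAux

/-- concatenation sends `R_p × R_q` injectively into the set of
multisegments of `R_{p+q}` having a special full column at `p`. -/
theorem concat_injective_special_full (p q : ℕ) (hp : 1 ≤ p) (hq : 1 ≤ q) :
    (∀ M N : Multiset Seg, InR p M → InR q N →
      InR (p + q) (concatMS p q M N) ∧ specialFullAt (concatMS p q M N) p) ∧
    (∀ M N M' N' : Multiset Seg, InR p M → InR q N → InR p M' → InR q N' →
      concatMS p q M N = concatMS p q M' N' → M = M' ∧ N = N') := by
  constructor
  · intro M N hM hN
    refine ⟨⟨ConcatAux.mem_concat p q M N hp hq hM hN, ?_⟩,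
      ConcatAux.special_concat p q M N hp hq hM hN⟩
    intro k hk1 hk2
    exact ConcatAux.wt_concat p q M N hp hq hM hN k hk1 hk2
  · intro M N M' N' hM hN hM' hN' h
    constructor
    · rw [ConcatAux.recoverM p q M N hp hq hM hN, ConcatAux.recoverM p q M' N' hp hq hM' hN', h]
    · rw [ConcatAux.recoverN p q M N hp hq hM hN, ConcatAux.recoverN p q M' N' hp hq hM' hN', h]
end

section
/- The set R of all multisegments of weight (n+1,...,n+1) (over all n ≥ 0), equipped with concatenation, is a graded monoid with the empty multisegment as identity; moreover the suspension map S: R → R is injective and its image consists of primitive elements of R. -/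
namespace RAux

/-- comparability of segments (one contains the other) -/
def Comp (s t : Seg) : Prop := (t.1 ≤ s.1 ∧ s.2 ≤ t.2) ∨ (s.1 ≤ t.1 ∧ t.2 ≤ s.2)

lemma Comp.symm {s t : Seg} (h : Comp s t) : Comp t s := h.elim Or.inr Or.inl

lemma comp_refl (s : Seg) : Comp s s := Or.inl ⟨le_refl _, le_refl _⟩

lemma zip_pairwise : ∀ {l₁ l₂ : List ℕ}, l₁.Pairwise (fun a b => b ≤ a) → l₂.Pairwise (· ≤ ·) →
    (l₁.zip l₂).Pairwise (fun x y : ℕ × ℕ => y.1 ≤ x.1 ∧ x.2 ≤ y.2)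
  | [], _, _, _ => by simp
  | a :: t₁, [], _, _ => by simp
  | a :: t₁, b :: t₂, h₁, h₂ => by
    rw [List.zip_cons_cons, List.pairwise_cons]
    rw [List.pairwise_cons] at h₁ h₂
    refine ⟨fun y hy => ?_, zip_pairwise h₁.2 h₂.2⟩
    have h := List.of_mem_zip (a := y.1) (b := y.2) (by simpa using hy)
    exact ⟨h₁.1 _ h.1, h₂.1 _ h.2⟩

lemma filter_zip_snd (P : ℕ → Bool) (hP : ∀ a b : ℕ, a ≤ b → P b → P a) :
    ∀ (l₁ l₂ : List ℕ), l₂.Pairwise (· ≤ ·) →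
      (l₁.zip l₂).filter (fun x => P x.2) = (l₁.take (l₂.countP P)).zip (l₂.filter P)
  | l₁, [], _ => by simp
  | [], b :: t₂, _ => by simp
  | a :: t₁, b :: t₂, h₂ => by
    rw [List.pairwise_cons] at h₂
    by_cases hb : P b
    · have h1 : (fun x : ℕ × ℕ => P x.2) (a, b) = true := by simpa using hb
      rw [List.zip_cons_cons, List.filter_cons, if_pos h1, List.countP_cons, if_pos hb,
        List.filter_cons, if_pos hb, List.take_succ_cons, List.zip_cons_cons,
        filter_zip_snd P hP t₁ t₂ h₂.2]
    · have hnone : ∀ x ∈ t₂, ¬ P x = true := fun x hx hPx => hb (hP b x (h₂.1 x hx) hPx)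
      have hc : (b :: t₂).countP P = 0 := List.countP_eq_zero.2 (by
        intro x hx; rcases List.mem_cons.1 hx with rfl | hx
        · simpa using hb
        · exact hnone x hx)
      rw [hc, List.take_zero, List.zip_nil_left]
      rw [List.filter_eq_nil_iff]
      intro x hx
      have h := List.of_mem_zip (a := x.1) (b := x.2) (by simpa only [Prod.mk.eta] using hx)
      rcases List.mem_cons.1 h.2 with he | hm
      · simpa [he] using hb
      · exact hnone _ hm

lemma sort_filter (E : Multiset ℕ) (P : ℕ → Prop) [DecidablePred P] :
    (E.sort (· ≤ ·)).filter (fun x => decide (P x)) = (E.filter P).sort (· ≤ ·) := by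
  apply fun h1 h2 h3 => List.Perm.eq_of_pairwise' (r := ((· ≤ ·) : ℕ → ℕ → Prop)) h2 h3 h1
  · rw [← Multiset.coe_eq_coe, ← Multiset.filter_coe, Multiset.sort_eq, Multiset.sort_eq]
  · exact (Multiset.pairwise_sort _ _).filter _
  · exact Multiset.pairwise_sort _ _

lemma sort_add_replicate_one (S : Multiset ℕ) (hS : ∀ x ∈ S, 1 ≤ x) (k : ℕ) :
    (S + Multiset.replicate k 1).sort (· ≤ ·) = List.replicate k 1 ++ S.sort (· ≤ ·) := by
  apply fun h1 h2 h3 => List.Perm.eq_of_pairwise' (r := ((· ≤ ·) : ℕ → ℕ → Prop)) h2 h3 h1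
  · rw [← Multiset.coe_eq_coe, Multiset.sort_eq]
    have : ((List.replicate k 1 ++ Multiset.sort S (· ≤ ·) : List ℕ) : Multiset ℕ)
        = (↑(List.replicate k 1) + ↑(Multiset.sort S (· ≤ ·)) : Multiset ℕ) := rfl
    rw [this, Multiset.coe_replicate, Multiset.sort_eq]
    exact add_comm _ _
  · exact Multiset.pairwise_sort _ _
  · refine List.pairwise_append.2
      ⟨List.pairwise_replicate.2 (by simp), Multiset.pairwise_sort _ _, ?_⟩
    intro a ha b hb
    rw [List.eq_of_mem_replicate ha]
    exact hS b (by rw [← Multiset.mem_sort (· ≤ ·)]; exact hb)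

lemma exists_max (S : Multiset ℕ) (h : S ≠ 0) : ∃ a ∈ S, ∀ b ∈ S, b ≤ a := by
  have hne : S.toFinset.Nonempty := by
    obtain ⟨x, hx⟩ := Multiset.exists_mem_of_ne_zero h
    exact ⟨x, Multiset.mem_toFinset.2 hx⟩
  exact ⟨S.toFinset.max' hne, Multiset.mem_toFinset.1 (Finset.max'_mem _ hne),
    fun b hb => Finset.le_max' _ _ (Multiset.mem_toFinset.2 hb)⟩

lemma exists_min (S : Multiset ℕ) (h : S ≠ 0) : ∃ a ∈ S, ∀ b ∈ S, a ≤ b := by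
  have hne : S.toFinset.Nonempty := by
    obtain ⟨x, hx⟩ := Multiset.exists_mem_of_ne_zero h
    exact ⟨x, Multiset.mem_toFinset.2 hx⟩
  exact ⟨S.toFinset.min' hne, Multiset.mem_toFinset.1 (Finset.min'_mem _ hne),
    fun b hb => Finset.min'_le _ _ (Multiset.mem_toFinset.2 hb)⟩

lemma mem_of_chain {X : Multiset Seg} (hX : ∀ a ∈ X, ∀ b ∈ X, Comp a b) {a b : ℕ}
    (ha : a ∈ X.map Prod.fst) (hamax : ∀ c ∈ X.map Prod.fst, c ≤ a)
    (hb : b ∈ X.map Prod.snd) (hbmin : ∀ c ∈ X.map Prod.snd, b ≤ c) : (a, b) ∈ X := by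
  obtain ⟨x, hx, hx1⟩ := Multiset.mem_map.1 ha
  obtain ⟨y, hy, hy2⟩ := Multiset.mem_map.1 hb
  rcases hX x hx y hy with ⟨h1, h2⟩ | ⟨h1, h2⟩
  · have : x = (a, b) := by
      refine Prod.ext hx1 (le_antisymm (hy2 ▸ h2) (hbmin x.2 (Multiset.mem_map_of_mem _ hx)))
    exact this ▸ hx
  · have : y = (a, b) := by
      refine Prod.ext (le_antisymm (hamax y.1 (Multiset.mem_map_of_mem _ hy)) (hx1 ▸ h1)) hy2
    exact this ▸ hy

lemma chain_unique (X : Multiset Seg) : ∀ (Y : Multiset Seg),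
    (∀ a ∈ X, ∀ b ∈ X, Comp a b) → (∀ a ∈ Y, ∀ b ∈ Y, Comp a b) →
    X.map Prod.fst = Y.map Prod.fst → X.map Prod.snd = Y.map Prod.snd → X = Y := by
  induction X using Multiset.strongInductionOn with
  | _ X ih =>
    intro Y hX hY hf hs
    rcases eq_or_ne X 0 with rfl | hX0
    · symm
      rw [← Multiset.map_eq_zero (f := Prod.fst)]
      rw [← hf]; simp
    · obtain ⟨a, haS, hamax⟩ := exists_max (X.map Prod.fst) (by simpa using hX0)
      obtain ⟨b, hbS, hbmin⟩ := exists_min (X.map Prod.snd) (by simpa using hX0)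
      have habX : (a, b) ∈ X := mem_of_chain hX haS hamax hbS hbmin
      have habY : (a, b) ∈ Y := mem_of_chain hY (hf ▸ haS) (fun c hc => hamax c (hf ▸ hc))
        (hs ▸ hbS) (fun c hc => hbmin c (hs ▸ hc))
      obtain ⟨X', rfl⟩ := Multiset.exists_cons_of_mem habX
      obtain ⟨Y', rfl⟩ := Multiset.exists_cons_of_mem habY
      have hf' : X'.map Prod.fst = Y'.map Prod.fst := by
        have := hf; rw [Multiset.map_cons, Multiset.map_cons] at this
        exact (Multiset.cons_inj_right _).1 this
      have hs' : X'.map Prod.snd = Y'.map Prod.snd := by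
        have := hs; rw [Multiset.map_cons, Multiset.map_cons] at this
        exact (Multiset.cons_inj_right _).1 this
      have : X' = Y' := ih X' (Multiset.lt_cons_self _ _) Y'
        (fun u hu v hv => hX u (Multiset.mem_cons_of_mem hu) v (Multiset.mem_cons_of_mem hv))
        (fun u hu v hv => hY u (Multiset.mem_cons_of_mem hu) v (Multiset.mem_cons_of_mem hv))
        hf' hs'
      rw [this]

end RAux

namespace RAux

def Sm (p : ℕ) (M : Multiset Seg) : Multiset ℕ := (M.filter (fun s : Seg => s.2 = p)).map Prod.fst
def En (N : Multiset Seg) : Multiset ℕ := (N.filter (fun s : Seg => s.1 = 1)).map Prod.snd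
def SL (p q : ℕ) (M : Multiset Seg) : List ℕ :=
  ((Sm p M + Multiset.replicate q 1).sort (· ≤ ·)).reverse
def EL (p q : ℕ) (N : Multiset Seg) : List ℕ := (En N + Multiset.replicate p q).sort (· ≤ ·)
def ZIP (p q : ℕ) (M N : Multiset Seg) : List (ℕ × ℕ) := (SL p q M).zip (EL p q N)
def ZL (p q : ℕ) (M N : Multiset Seg) : List Seg :=
  (ZIP p q M N).map (fun x : ℕ × ℕ => (x.1, x.2 + p))

lemma concat_eq {p q : ℕ} (M N : Multiset Seg) (hp : p ≠ 0) (hq : q ≠ 0) : concatMS p q M N =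
    M.filter (fun s => s.2 < p)
      + (N.filter (fun s => 1 < s.1)).map (fun s => (s.1 + p, s.2 + p)) + ↑(ZL p q M N) := by
  rw [concatMS, if_neg hp, if_neg hq]; rfl

variable {p q : ℕ} {M N : Multiset Seg}

lemma filter_end_eq (hM : InR p M) (hp : p ≠ 0) :
    M.filter (fun s : Seg => s.1 ≤ p ∧ p ≤ s.2) = M.filter (fun s : Seg => s.2 = p) :=
  Multiset.filter_congr (fun s hs => by have h := hM.1 s hs; constructor <;> intro <;> omega)

lemma filter_start_eq (hN : InR q N) :
    N.filter (fun s : Seg => s.1 ≤ 1 ∧ 1 ≤ s.2) = N.filter (fun s : Seg => s.1 = 1) :=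
  Multiset.filter_congr (fun s hs => by have h := hN.1 s hs; constructor <;> intro <;> omega)

lemma card_Sm (hM : InR p M) (hp : p ≠ 0) : Multiset.card (Sm p M) = p + 1 := by
  have h := hM.2 p (by omega) le_rfl
  unfold wt at h
  rw [Sm, Multiset.card_map, ← filter_end_eq hM hp]
  exact h

lemma card_En (hN : InR q N) (hq : q ≠ 0) : Multiset.card (En N) = q + 1 := by
  have h := hN.2 1 le_rfl (by omega)
  unfold wt at h
  rw [En, Multiset.card_map, ← filter_start_eq hN]
  exact h

lemma mem_Sm (hM : InR p M) : ∀ x ∈ Sm p M, 1 ≤ x ∧ x ≤ p := by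
  intro x hx
  obtain ⟨s, hs, rfl⟩ := Multiset.mem_map.1 hx
  have h2 := (Multiset.mem_filter.1 hs).2
  have h := hM.1 s (Multiset.mem_filter.1 hs).1
  omega

lemma mem_En (hN : InR q N) : ∀ x ∈ En N, 1 ≤ x ∧ x ≤ q := by
  intro x hx
  obtain ⟨s, hs, rfl⟩ := Multiset.mem_map.1 hx
  have h := hN.1 s (Multiset.mem_filter.1 hs).1
  omega

lemma coe_SL : ((SL p q M : List ℕ) : Multiset ℕ) = Sm p M + Multiset.replicate q 1 := by
  rw [SL, Multiset.coe_reverse, Multiset.sort_eq]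

lemma coe_EL : ((EL p q N : List ℕ) : Multiset ℕ) = En N + Multiset.replicate p q := by
  rw [EL, Multiset.sort_eq]

lemma mem_SL (hM : InR p M) (hp : p ≠ 0) : ∀ x ∈ SL p q M, 1 ≤ x ∧ x ≤ p := by
  intro x hx
  have : x ∈ Sm p M + Multiset.replicate q 1 := by rw [← coe_SL]; exact Multiset.mem_coe.2 hx
  rcases Multiset.mem_add.1 this with h | h
  · exact mem_Sm hM x h
  · have := (Multiset.mem_replicate.1 h).2; omega

lemma mem_EL (hN : InR q N) (hq : q ≠ 0) : ∀ x ∈ EL p q N, 1 ≤ x ∧ x ≤ q := by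
  intro x hx
  have : x ∈ En N + Multiset.replicate p q := by rw [← coe_EL]; exact Multiset.mem_coe.2 hx
  rcases Multiset.mem_add.1 this with h | h
  · exact mem_En hN x h
  · have := (Multiset.mem_replicate.1 h).2; omega

lemma length_SL (hM : InR p M) (hp : p ≠ 0) : (SL p q M).length = p + 1 + q := by
  rw [SL, List.length_reverse, Multiset.length_sort, Multiset.card_add, card_Sm hM hp,
    Multiset.card_replicate]

lemma length_EL (hN : InR q N) (hq : q ≠ 0) : (EL p q N).length = q + 1 + p := by
  rw [EL, Multiset.length_sort, Multiset.card_add, card_En hN hq, Multiset.card_replicate]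

lemma len_eq (hM : InR p M) (hN : InR q N) (hp : p ≠ 0) (hq : q ≠ 0) :
    (SL p q M).length = (EL p q N).length := by
  rw [length_SL hM hp, length_EL hN hq]; omega

lemma SL_sorted : (SL p q M).Pairwise (fun a b => b ≤ a) := by
  rw [SL, List.pairwise_reverse]
  exact Multiset.pairwise_sort _ _

lemma EL_sorted : (EL p q N).Pairwise (· ≤ ·) := Multiset.pairwise_sort _ _

lemma ZIP_pairwise : (ZIP p q M N).Pairwise (fun x y : ℕ × ℕ => y.1 ≤ x.1 ∧ x.2 ≤ y.2) :=
  zip_pairwise SL_sorted EL_sorted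

lemma map_fst_ZIP (hM : InR p M) (hN : InR q N) (hp : p ≠ 0) (hq : q ≠ 0) :
    (ZIP p q M N).map Prod.fst = SL p q M :=
  List.map_fst_zip (le_of_eq (len_eq hM hN hp hq))

lemma map_snd_ZIP (hM : InR p M) (hN : InR q N) (hp : p ≠ 0) (hq : q ≠ 0) :
    (ZIP p q M N).map Prod.snd = EL p q N :=
  List.map_snd_zip (le_of_eq (len_eq hM hN hp hq).symm)

lemma mem_ZIP (hM : InR p M) (hN : InR q N) (hp : p ≠ 0) (hq : q ≠ 0) :
    ∀ x ∈ ZIP p q M N, (1 ≤ x.1 ∧ x.1 ≤ p) ∧ (1 ≤ x.2 ∧ x.2 ≤ q) := by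
  intro x hx
  have h := List.of_mem_zip (a := x.1) (b := x.2) (by simpa only [Prod.mk.eta, ZIP] using hx)
  exact ⟨mem_SL hM hp _ h.1, mem_EL hN hq _ h.2⟩

end RAux

namespace RAux

variable {p q : ℕ} {M N : Multiset Seg}

lemma split_M (hM : InR p M) :
    M.filter (fun s : Seg => s.2 < p) + M.filter (fun s : Seg => s.2 = p) = M := by
  have h : M.filter (fun s : Seg => ¬ s.2 < p) = M.filter (fun s : Seg => s.2 = p) :=
    Multiset.filter_congr (fun s hs => by
      have h := hM.1 s hs; constructor <;> intro <;> omega)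
  rw [← h]; exact Multiset.filter_add_not _ M

lemma split_N (hN : InR q N) :
    N.filter (fun s : Seg => 1 < s.1) + N.filter (fun s : Seg => s.1 = 1) = N := by
  have h : N.filter (fun s : Seg => ¬ 1 < s.1) = N.filter (fun s : Seg => s.1 = 1) :=
    Multiset.filter_congr (fun s hs => by
      have h := hN.1 s hs; constructor <;> intro <;> omega)
  rw [← h]; exact Multiset.filter_add_not _ N

lemma card_coe_filter (P : Seg → Prop) [DecidablePred P] (l : List Seg) :
    Multiset.card (Multiset.filter P (l : Multiset Seg)) =
      List.countP (fun b => decide (P b)) l := by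
  rw [Multiset.filter_coe, Multiset.coe_card, List.countP_eq_length_filter]

lemma wt_concat (hM : InR p M) (hN : InR q N) (hp : p ≠ 0) (hq : q ≠ 0)
    (k : ℕ) (hk1 : 1 ≤ k) (hk2 : k ≤ p + q) :
    wt (concatMS p q M N) k = p + q + 1 := by
  rw [concat_eq M N hp hq]
  unfold wt
  rw [Multiset.filter_add, Multiset.filter_add, Multiset.card_add, Multiset.card_add,
    card_coe_filter]
  rw [ZL, List.countP_map]
  by_cases hkp : k ≤ p
  · -- middle part empty
    have h2 : Multiset.card ((Multiset.filter (fun s : Seg => s.1 ≤ k ∧ k ≤ s.2)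
        ((N.filter (fun s : Seg => 1 < s.1)).map (fun s : Seg => (s.1+p, s.2+p))))) = 0 := by
      rw [Multiset.card_eq_zero, Multiset.filter_eq_nil]
      intro a ha
      obtain ⟨t, ht, rfl⟩ := Multiset.mem_map.1 ha
      have h3 := (Multiset.mem_filter.1 ht).2
      simp only [not_and]
      intro h
      exfalso; omega
    -- zip part
    have h3 : List.countP ((fun b : Seg => decide (b.1 ≤ k ∧ k ≤ b.2)) ∘
        (fun x : ℕ × ℕ => (x.1, x.2 + p))) (ZIP p q M N)
        = List.countP (fun x : ℕ × ℕ => decide (x.1 ≤ k)) (ZIP p q M N) := by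
      apply List.countP_congr
      intro x _
      simp only [Function.comp_apply, decide_eq_true_eq]
      constructor <;> intro <;> [exact (by omega : x.1 ≤ k); exact ⟨by omega, by omega⟩]
    rw [h2, h3]
    have h4 : List.countP (fun x : ℕ × ℕ => decide (x.1 ≤ k)) (ZIP p q M N)
        = List.countP (fun x : ℕ => decide (x ≤ k)) (SL p q M) := by
      rw [← map_fst_ZIP hM hN hp hq, List.countP_map]; rfl
    rw [h4]
    have h5 : List.countP (fun x : ℕ => decide (x ≤ k)) (SL p q M)
        = Multiset.countP (fun x : ℕ => x ≤ k) (Sm p M + Multiset.replicate q 1) := by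
      rw [← coe_SL, Multiset.coe_countP]
    rw [h5, Multiset.countP_add]
    have h6 : Multiset.countP (fun x : ℕ => x ≤ k) (Multiset.replicate q 1) = q := by
      rw [Multiset.countP_eq_card_filter, Multiset.filter_eq_self.2, Multiset.card_replicate]
      intro a ha
      have := (Multiset.mem_replicate.1 ha).2; omega
    rw [h6]
    have h7 : Multiset.countP (fun x : ℕ => x ≤ k) (Sm p M)
        = Multiset.card ((M.filter (fun s : Seg => s.2 = p)).filter (fun s : Seg => s.1 ≤ k)) := by
      rw [Sm, Multiset.countP_map]
    rw [h7]
    have hwtM := hM.2 k hk1 hkp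
    unfold wt at hwtM
    rw [← split_M hM, Multiset.filter_add, Multiset.card_add] at hwtM
    have h8 : (M.filter (fun s : Seg => s.2 = p)).filter (fun s : Seg => s.1 ≤ k ∧ k ≤ s.2)
        = (M.filter (fun s : Seg => s.2 = p)).filter (fun s : Seg => s.1 ≤ k) :=
      Multiset.filter_congr (fun s hs => by
        have h2 := (Multiset.mem_filter.1 hs).2; constructor <;> intro <;> omega)
    rw [h8] at hwtM
    omega
  · -- k > p
    have h1 : Multiset.card (Multiset.filter (fun s : Seg => s.1 ≤ k ∧ k ≤ s.2)
        (M.filter (fun s : Seg => s.2 < p))) = 0 := by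
      rw [Multiset.card_eq_zero, Multiset.filter_eq_nil]
      intro a ha
      have h2 := (Multiset.mem_filter.1 ha).2
      simp only [not_and]; intro; omega
    rw [h1]
    -- middle part
    have h2 : Multiset.filter (fun s : Seg => s.1 ≤ k ∧ k ≤ s.2)
        ((N.filter (fun s : Seg => 1 < s.1)).map (fun s : Seg => (s.1+p, s.2+p)))
        = ((N.filter (fun s : Seg => 1 < s.1)).filter
            (fun s : Seg => s.1 + p ≤ k ∧ k ≤ s.2 + p)).map (fun s : Seg => (s.1+p, s.2+p)) := by
      rw [Multiset.filter_map]; rfl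
    rw [h2, Multiset.card_map]
    -- zip part
    have h3 : List.countP ((fun b : Seg => decide (b.1 ≤ k ∧ k ≤ b.2)) ∘
        (fun x : ℕ × ℕ => (x.1, x.2 + p))) (ZIP p q M N)
        = List.countP (fun x : ℕ × ℕ => decide (k ≤ x.2 + p)) (ZIP p q M N) := by
      apply List.countP_congr
      intro x hx
      have hb := mem_ZIP hM hN hp hq x hx
      simp only [Function.comp_apply, decide_eq_true_eq]
      constructor <;> intro h
      · exact h.2
      · exact ⟨by omega, h⟩
    rw [h3]
    have h4 : List.countP (fun x : ℕ × ℕ => decide (k ≤ x.2 + p)) (ZIP p q M N)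
        = List.countP (fun x : ℕ => decide (k ≤ x + p)) (EL p q N) := by
      rw [← map_snd_ZIP hM hN hp hq, List.countP_map]; rfl
    rw [h4]
    have h5 : List.countP (fun x : ℕ => decide (k ≤ x + p)) (EL p q N)
        = Multiset.countP (fun x : ℕ => k ≤ x + p) (En N + Multiset.replicate p q) := by
      rw [← coe_EL, Multiset.coe_countP]
    rw [h5, Multiset.countP_add]
    have h6 : Multiset.countP (fun x : ℕ => k ≤ x + p) (Multiset.replicate p q) = p := by
      rw [Multiset.countP_eq_card_filter, Multiset.filter_eq_self.2, Multiset.card_replicate]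
      intro a ha
      have := (Multiset.mem_replicate.1 ha).2; omega
    rw [h6]
    have h7 : Multiset.countP (fun x : ℕ => k ≤ x + p) (En N)
        = Multiset.card ((N.filter (fun s : Seg => s.1 = 1)).filter
            (fun s : Seg => k ≤ s.2 + p)) := by
      rw [En, Multiset.countP_map]
    rw [h7]
    have hwtN := hN.2 (k - p) (by omega) (by omega)
    unfold wt at hwtN
    rw [← split_N hN, Multiset.filter_add, Multiset.card_add] at hwtN
    have h8 : (N.filter (fun s : Seg => s.1 = 1)).filter
          (fun s : Seg => s.1 ≤ k - p ∧ k - p ≤ s.2)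
        = (N.filter (fun s : Seg => s.1 = 1)).filter (fun s : Seg => k ≤ s.2 + p) :=
      Multiset.filter_congr (fun s hs => by
        have h2 := (Multiset.mem_filter.1 hs).2; constructor <;> intro <;> omega)
    have h9 : (N.filter (fun s : Seg => 1 < s.1)).filter
          (fun s : Seg => s.1 ≤ k - p ∧ k - p ≤ s.2)
        = (N.filter (fun s : Seg => 1 < s.1)).filter
            (fun s : Seg => s.1 + p ≤ k ∧ k ≤ s.2 + p) :=
      Multiset.filter_congr (fun s hs => by
        have h2 := (Multiset.mem_filter.1 hs).2
        constructor <;> intro h <;> exact ⟨by omega, by omega⟩)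
    rw [h8, h9] at hwtN
    omega

lemma mem_concat_bounds (hM : InR p M) (hN : InR q N) (hp : p ≠ 0) (hq : q ≠ 0) :
    ∀ s ∈ concatMS p q M N, 1 ≤ s.1 ∧ s.1 ≤ s.2 ∧ s.2 ≤ p + q := by
  rw [concat_eq M N hp hq]
  intro s hs
  rcases Multiset.mem_add.1 hs with hs | hs
  · rcases Multiset.mem_add.1 hs with hs | hs
    · have h := hM.1 s (Multiset.mem_of_mem_filter hs)
      have h2 := (Multiset.mem_filter.1 hs).2
      omega
    · obtain ⟨t, ht, rfl⟩ := Multiset.mem_map.1 hs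
      have h := hN.1 t (Multiset.mem_of_mem_filter ht)
      simp only
      omega
  · obtain ⟨x, hx, rfl⟩ := List.mem_map.1 (Multiset.mem_coe.1 hs)
    have h := mem_ZIP hM hN hp hq x hx
    simp only
    omega

lemma InR_concat (hM : InR p M) (hN : InR q N) : InR (p + q) (concatMS p q M N) := by
  rcases Nat.eq_zero_or_pos p with rfl | hp
  · rw [concatMS, if_pos rfl]; simpa using hN
  rcases Nat.eq_zero_or_pos q with rfl | hq
  · rw [concatMS, if_neg (by omega), if_pos rfl]; simpa using hM
  exact ⟨mem_concat_bounds hM hN (by omega) (by omega),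
    fun k hk1 hk2 => wt_concat hM hN (by omega) (by omega) k hk1 hk2⟩

lemma concat_no_end (hM : InR p M) (hN : InR q N) (hp : p ≠ 0) (hq : q ≠ 0) :
    ∀ s ∈ concatMS p q M N, s.2 ≠ p := by
  rw [concat_eq M N hp hq]
  intro s hs
  rcases Multiset.mem_add.1 hs with hs | hs
  · rcases Multiset.mem_add.1 hs with hs | hs
    · have h2 := (Multiset.mem_filter.1 hs).2; omega
    · obtain ⟨t, ht, rfl⟩ := Multiset.mem_map.1 hs
      have h := hN.1 t (Multiset.mem_of_mem_filter ht)
      simp only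
      omega
  · obtain ⟨x, hx, rfl⟩ := List.mem_map.1 (Multiset.mem_coe.1 hs)
    have h := mem_ZIP hM hN hp hq x hx
    simp only
    omega

lemma ZL_pairwise : (ZL p q M N : List Seg).Pairwise Comp := by
  rw [ZL, List.pairwise_map]
  exact ZIP_pairwise.imp (fun h => Or.inl ⟨h.1, by simpa using Nat.add_le_add_right h.2 p⟩)

lemma comp_symmetric : Symmetric Comp := fun _ _ h => h.symm

lemma concat_chain (hM : InR p M) (hN : InR q N) (hp : p ≠ 0) (hq : q ≠ 0) :
    ∀ s ∈ concatMS p q M N, s.1 ≤ p → p < s.2 →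
      ∀ t ∈ concatMS p q M N, t.1 ≤ p → p < t.2 → Comp s t := by
  have key : ∀ s ∈ concatMS p q M N, s.1 ≤ p → p < s.2 → s ∈ ZL p q M N := by
    rw [concat_eq M N hp hq]
    intro s hs h1 h2
    rcases Multiset.mem_add.1 hs with hs | hs
    · rcases Multiset.mem_add.1 hs with hs | hs
      · exfalso; have := (Multiset.mem_filter.1 hs).2; omega
      · exfalso
        obtain ⟨t, ht, rfl⟩ := Multiset.mem_map.1 hs
        have h3 := (Multiset.mem_filter.1 ht).2
        simp only at h1
        omega
    · exact Multiset.mem_coe.1 hs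
  intro s hs hs1 hs2 t ht ht1 ht2
  have hs' := key s hs hs1 hs2
  have ht' := key t ht ht1 ht2
  rcases eq_or_ne s t with rfl | hne
  · exact comp_refl s
  · haveI : Std.Symm Comp := ⟨fun _ _ h => comp_symmetric h⟩
    exact ZL_pairwise.forall hs' ht' hne

end RAux

namespace RAux

lemma InR_zero {M : Multiset Seg} (hM : InR 0 M) : M = 0 :=
  Multiset.eq_zero_of_forall_notMem (fun s hs => by have := hM.1 s hs; omega)

lemma part3 : ∀ p (M : Multiset Seg), InR p M →
    concatMS p 0 M 0 = M ∧ concatMS 0 p 0 M = M := by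
  intro p M hM
  constructor
  · rcases Nat.eq_zero_or_pos p with rfl | hp
    · rw [concatMS, if_pos rfl, InR_zero hM]
    · rw [concatMS, if_neg (by omega), if_pos rfl]
  · rw [concatMS, if_pos rfl]

lemma part4 : ∀ n (M M' : Multiset Seg), InR n M → InR n M' →
    suspMS n M = suspMS n M' → M = M' := by
  intro n M M' hM hM' heq
  rcases Nat.eq_zero_or_pos n with rfl | hn
  · rw [InR_zero hM, InR_zero hM']
  · rw [suspMS, if_neg (by omega), suspMS, if_neg (by omega)] at heq
    have heq2 := add_right_cancel heq
    set f := fun s : Seg =>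
      ((if s.1 = 1 then 1 else s.1 + 1, if s.2 = n then n + 2 else s.2 + 1) : Seg) with hf
    set g := fun s : Seg =>
      ((if s.1 = 1 then 1 else s.1 - 1, if s.2 = n + 2 then n else s.2 - 1) : Seg) with hg
    have key : ∀ (X : Multiset Seg), InR n X → (X.map f).map g = X := by
      intro X hX
      rw [Multiset.map_map]
      have hgf : ∀ s ∈ X, (g ∘ f) s = id s := by
        intro s hs
        have h := hX.1 s hs
        simp only [Function.comp_apply, hf, hg, id]
        rw [Prod.ext_iff]
        constructor <;> simp only <;> split_ifs <;> omega
      rw [Multiset.map_congr rfl hgf, Multiset.map_id]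
    calc M = (M.map f).map g := (key M hM).symm
    _ = (M'.map f).map g := by rw [heq2]
    _ = M' := key M' hM'

lemma part5 : ∀ n (M : Multiset Seg), InR n M → ¬ ∃ (p q : ℕ) (A B : Multiset Seg),
    1 ≤ p ∧ 1 ≤ q ∧ p + q = n + 2 ∧ InR p A ∧ InR q B ∧
    suspMS n M = concatMS p q A B := by
  intro n M hM
  rintro ⟨p, q, A, B, hp, hq, hpq, hA, hB, heq⟩
  have hnoend : ∀ s ∈ suspMS n M, s.2 ≠ p := by
    rw [heq]; exact concat_no_end hA hB (by omega) (by omega)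
  rcases Nat.eq_zero_or_pos n with rfl | hn
  · have h11 : ((1,1) : Seg) ∈ suspMS 0 M := by
      rw [suspMS, if_pos rfl]; simp
    have e1 : (1 : ℕ) ≠ p := hnoend _ h11
    omega
  · have hmem : ∀ x : Seg,
        x ∈ ({((1:ℕ),(1:ℕ)), (2, n+2), (1, n+1), (n+2, n+2)} : Multiset Seg) →
        x ∈ suspMS n M := by
      intro x hx
      rw [suspMS, if_neg (by omega)]
      exact Multiset.mem_add.2 (Or.inr hx)
    have h11 := hmem (1,1) (by simp)
    have h1n1 := hmem (1, n+1) (by simp)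
    have h2n2 := hmem (2, n+2) (by simp)
    have e1 : (1 : ℕ) ≠ p := hnoend _ h11
    have e2 : (n + 1 : ℕ) ≠ p := hnoend _ h1n1
    have hchain := concat_chain hA hB (by omega) (by omega)
    rw [← heq] at hchain
    have hc := hchain (1, n+1) h1n1 (show (1:ℕ) ≤ p by omega) (show p < n+1 by omega)
      (2, n+2) h2n2 (show (2:ℕ) ≤ p by omega) (show p < n+2 by omega)
    rcases hc with ⟨h, h'⟩ | ⟨h, h'⟩
    · exact absurd h (by omega)
    · exact absurd h' (by omega)

end RAux

namespace RAux

variable {p q : ℕ} {M N : Multiset Seg}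

lemma filter_coe_map (P : Seg → Prop) [DecidablePred P] (f : ℕ × ℕ → Seg) (l : List (ℕ × ℕ)) :
    Multiset.filter P ↑(l.map f) = ↑((l.filter (fun x => decide (P (f x)))).map f) := by
  rw [Multiset.filter_coe, List.filter_map]
  rfl

lemma chain_of_pairwise {l : List Seg} (h : l.Pairwise Comp) :
    ∀ a ∈ (l : Multiset Seg), ∀ b ∈ (l : Multiset Seg), Comp a b := by
  intro a ha b hb
  rcases eq_or_ne a b with rfl | hne
  · exact comp_refl a
  · haveI : Std.Symm Comp := ⟨fun _ _ h => comp_symmetric h⟩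
    exact h.forall (Multiset.mem_coe.1 ha) (Multiset.mem_coe.1 hb) hne

lemma tri_partition (p q : ℕ) (X : Multiset Seg) :
    X = X.filter (fun s : Seg => s.1 ≤ p ∧ p < s.2 ∧ s.2 < p + q)
      + X.filter (fun s : Seg => s.1 ≤ p + q ∧ p + q < s.2)
      + X.filter (fun s : Seg =>
          ¬((s.1 ≤ p ∧ p < s.2 ∧ s.2 < p + q) ∨ (s.1 ≤ p + q ∧ p + q < s.2))) := by
  conv_lhs => rw [← Multiset.filter_add_not
    (fun s : Seg => (s.1 ≤ p ∧ p < s.2 ∧ s.2 < p + q) ∨ (s.1 ≤ p + q ∧ p + q < s.2)) X]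
  congr 1
  have h1 : X.filter (fun s : Seg =>
      ((s.1 ≤ p ∧ p < s.2 ∧ s.2 < p + q) ∧ (s.1 ≤ p + q ∧ p + q < s.2))) = 0 :=
    Multiset.filter_eq_nil.2 (fun a _ => by omega)
  rw [← add_zero (Multiset.filter _ X), ← h1, ← Multiset.filter_add_filter]

/-- starts of segments of a concatenation ending at the top -/
lemma Sm_concat (hM : InR p M) (hN : InR q N) (hp : p ≠ 0) (hq : q ≠ 0) :
    Sm (p + q) (concatMS p q M N)
      = (N.filter (fun s : Seg => 1 < s.1 ∧ s.2 = q)).map (fun s : Seg => s.1 + p)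
        + ↑(((ZIP p q M N).filter (fun x : ℕ × ℕ => decide (x.2 = q))).map Prod.fst) := by
  rw [Sm, concat_eq M N hp hq, Multiset.filter_add, Multiset.filter_add]
  have h1 : (M.filter (fun s : Seg => s.2 < p)).filter (fun s : Seg => s.2 = p + q) = 0 :=
    Multiset.filter_eq_nil.2 (fun a ha => by
      have := (Multiset.mem_filter.1 ha).2; omega)
  have h2 : ((N.filter (fun s : Seg => 1 < s.1)).map
        (fun s : Seg => (s.1 + p, s.2 + p))).filter (fun s : Seg => s.2 = p + q)
      = ((N.filter (fun s : Seg => 1 < s.1 ∧ s.2 = q)).map (fun s : Seg => (s.1 + p, s.2 + p))) := by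
    rw [Multiset.filter_map]
    congr 1
    rw [Multiset.filter_filter]
    exact Multiset.filter_congr (fun s _ => by
      simp only [Function.comp_apply]; constructor <;> intro <;> omega)
  have h3 : Multiset.filter (fun s : Seg => s.2 = p + q) ↑(ZL p q M N)
      = ↑(((ZIP p q M N).filter (fun x : ℕ × ℕ => decide (x.2 = q))).map
          (fun x : ℕ × ℕ => (x.1, x.2 + p))) := by
    rw [ZL, filter_coe_map]
    congr 1
    congr 1
    apply List.filter_congr
    intro x _
    exact decide_eq_decide.2 (by simp only; omega)
  rw [h1, h2, h3, Multiset.map_add, Multiset.map_add]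
  simp only [Multiset.map_map, Multiset.map_coe, List.map_map, Multiset.map_zero, zero_add]
  rfl

/-- ends of segments of a concatenation starting at 1 -/
lemma En_concat (hM : InR p M) (hN : InR q N) (hp : p ≠ 0) (hq : q ≠ 0) :
    En (concatMS p q M N)
      = (M.filter (fun s : Seg => s.1 = 1 ∧ s.2 < p)).map Prod.snd
        + ↑(((ZIP p q M N).filter (fun x : ℕ × ℕ => decide (x.1 = 1))).map
            (fun x : ℕ × ℕ => x.2 + p)) := by
  rw [En, concat_eq M N hp hq, Multiset.filter_add, Multiset.filter_add]
  have h1 : (M.filter (fun s : Seg => s.2 < p)).filter (fun s : Seg => s.1 = 1)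
      = M.filter (fun s : Seg => s.1 = 1 ∧ s.2 < p) := by
    rw [Multiset.filter_filter]
  have h2 : ((N.filter (fun s : Seg => 1 < s.1)).map
        (fun s : Seg => (s.1 + p, s.2 + p))).filter (fun s : Seg => s.1 = 1) = 0 :=
    Multiset.filter_eq_nil.2 (fun a ha => by
      obtain ⟨t, ht, rfl⟩ := Multiset.mem_map.1 ha
      have ht2 := (Multiset.mem_filter.1 ht).2
      simp only
      omega)
  have h3 : Multiset.filter (fun s : Seg => s.1 = 1) ↑(ZL p q M N)
      = ↑(((ZIP p q M N).filter (fun x : ℕ × ℕ => decide (x.1 = 1))).map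
          (fun x : ℕ × ℕ => (x.1, x.2 + p))) := by
    rw [ZL, filter_coe_map]
  rw [h1, h2, h3, Multiset.map_add, Multiset.map_add]
  simp only [Multiset.map_coe, List.map_map, Multiset.map_zero, add_zero]
  rfl

/-- segments of a concatenation with start > 1 -/
lemma concat_filter_start_gt (hM : InR p M) (hN : InR q N) (hp : p ≠ 0) (hq : q ≠ 0) :
    (concatMS p q M N).filter (fun s : Seg => 1 < s.1)
      = M.filter (fun s : Seg => 1 < s.1 ∧ s.2 < p)
        + (N.filter (fun s : Seg => 1 < s.1)).map (fun s : Seg => (s.1 + p, s.2 + p))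
        + ↑(((ZIP p q M N).filter (fun x : ℕ × ℕ => decide (1 < x.1))).map
            (fun x : ℕ × ℕ => (x.1, x.2 + p))) := by
  rw [concat_eq M N hp hq, Multiset.filter_add, Multiset.filter_add]
  have h1 : (M.filter (fun s : Seg => s.2 < p)).filter (fun s : Seg => 1 < s.1)
      = M.filter (fun s : Seg => 1 < s.1 ∧ s.2 < p) := by
    rw [Multiset.filter_filter]
  have h2 : ((N.filter (fun s : Seg => 1 < s.1)).map
        (fun s : Seg => (s.1 + p, s.2 + p))).filter (fun s : Seg => 1 < s.1)
      = (N.filter (fun s : Seg => 1 < s.1)).map (fun s : Seg => (s.1 + p, s.2 + p)) :=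
    Multiset.filter_eq_self.2 (fun a ha => by
      obtain ⟨t, ht, rfl⟩ := Multiset.mem_map.1 ha
      have h := hN.1 t (Multiset.mem_of_mem_filter ht)
      simp only
      omega)
  have h3 : Multiset.filter (fun s : Seg => 1 < s.1) ↑(ZL p q M N)
      = ↑(((ZIP p q M N).filter (fun x : ℕ × ℕ => decide (1 < x.1))).map
          (fun x : ℕ × ℕ => (x.1, x.2 + p))) := by
    rw [ZL, filter_coe_map]
  rw [h1, h2, h3]

/-- the ends of the glue list of a concatenation never equal the cut point -/
lemma mem_EL_concat_ne {r : ℕ} {P : Multiset Seg} (hN : InR q N) (hP : InR r P)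
    (hq : q ≠ 0) (hr : r ≠ 0) :
    ∀ v ∈ EL p (q + r) (concatMS q r N P), v ≠ q := by
  intro v hv
  have hv' : v ∈ En (concatMS q r N P) + Multiset.replicate p (q + r) := by
    rw [← coe_EL]; exact Multiset.mem_coe.2 hv
  rcases Multiset.mem_add.1 hv' with h | h
  · obtain ⟨s, hs, rfl⟩ := Multiset.mem_map.1 h
    exact concat_no_end hN hP hq hr s (Multiset.mem_of_mem_filter hs)
  · have := (Multiset.mem_replicate.1 h).2; omega

end RAux

namespace RAux

variable {p q r : ℕ} {M N P : Multiset Seg}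

lemma countP_lt_EL (hN : InR q N) (hq : q ≠ 0) :
    List.countP (fun v : ℕ => decide (v < q)) (EL p q N)
      = Multiset.card (N.filter (fun s : Seg => s.1 = 1 ∧ s.2 < q)) := by
  have h : List.countP (fun v : ℕ => decide (v < q)) (EL p q N)
      = Multiset.countP (fun v : ℕ => v < q) (En N + Multiset.replicate p q) := by
    rw [← coe_EL, Multiset.coe_countP]
  rw [h, Multiset.countP_add]
  have h2 : Multiset.countP (fun v : ℕ => v < q) (Multiset.replicate p q) = 0 := by
    rw [Multiset.countP_eq_card_filter, Multiset.filter_eq_nil.2, Multiset.card_zero]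
    intro a ha
    have := (Multiset.mem_replicate.1 ha).2
    omega
  rw [h2, add_zero, En, Multiset.countP_map, Multiset.filter_filter]
  exact congrArg _ (Multiset.filter_congr (fun s _ => and_comm))

lemma countP_lt_EL_concat (hN : InR q N) (hP : InR r P) (hq : q ≠ 0) (hr : r ≠ 0) :
    List.countP (fun v : ℕ => decide (v < q)) (EL p (q + r) (concatMS q r N P))
      = Multiset.card (N.filter (fun s : Seg => s.1 = 1 ∧ s.2 < q)) := by
  have h : List.countP (fun v : ℕ => decide (v < q)) (EL p (q + r) (concatMS q r N P))
      = Multiset.countP (fun v : ℕ => v < q)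
          (En (concatMS q r N P) + Multiset.replicate p (q + r)) := by
    rw [← coe_EL, Multiset.coe_countP]
  rw [h, Multiset.countP_add]
  have h2 : Multiset.countP (fun v : ℕ => v < q) (Multiset.replicate p (q + r)) = 0 := by
    rw [Multiset.countP_eq_card_filter, Multiset.filter_eq_nil.2, Multiset.card_zero]
    intro a ha
    have := (Multiset.mem_replicate.1 ha).2
    omega
  rw [h2, add_zero, En_concat hN hP hq hr, Multiset.countP_add]
  have h3 : Multiset.countP (fun v : ℕ => v < q)
      ↑(((ZIP q r N P).filter (fun x : ℕ × ℕ => decide (x.1 = 1))).map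
          (fun x : ℕ × ℕ => x.2 + q)) = 0 := by
    rw [Multiset.coe_countP, List.countP_map, List.countP_eq_zero]
    intro x _
    simp only [Function.comp_apply, decide_eq_true_eq]
    omega
  rw [h3, add_zero, Multiset.countP_map]
  rw [Multiset.filter_eq_self.2 (fun a ha => (Multiset.mem_filter.1 ha).2.2)]

/-- the multiset of ends below the cut in both glue lists -/
lemma filter_lt_En_concat (hN : InR q N) (hP : InR r P) (hq : q ≠ 0) (hr : r ≠ 0) :
    Multiset.filter (fun v : ℕ => v < q) (En (concatMS q r N P))
      = (N.filter (fun s : Seg => s.1 = 1 ∧ s.2 < q)).map Prod.snd := by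
  rw [En_concat hN hP hq hr, Multiset.filter_add]
  have h1 : Multiset.filter (fun v : ℕ => v < q)
      ((N.filter (fun s : Seg => s.1 = 1 ∧ s.2 < q)).map Prod.snd)
      = (N.filter (fun s : Seg => s.1 = 1 ∧ s.2 < q)).map Prod.snd :=
    Multiset.filter_eq_self.2 (fun a ha => by
      obtain ⟨s, hs, rfl⟩ := Multiset.mem_map.1 ha
      exact (Multiset.mem_filter.1 hs).2.2)
  have h2 : Multiset.filter (fun v : ℕ => v < q)
      ↑(((ZIP q r N P).filter (fun x : ℕ × ℕ => decide (x.1 = 1))).map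
          (fun x : ℕ × ℕ => x.2 + q)) = 0 := by
    rw [Multiset.filter_eq_nil]
    intro a ha
    obtain ⟨x, _, rfl⟩ := List.mem_map.1 (Multiset.mem_coe.1 ha)
    omega
  rw [h1, h2, add_zero]

lemma filter_lt_En (hN : InR q N) :
    Multiset.filter (fun v : ℕ => v < q) (En N)
      = (N.filter (fun s : Seg => s.1 = 1 ∧ s.2 < q)).map Prod.snd := by
  rw [En, Multiset.filter_map, Multiset.filter_filter]
  exact congrArg _ (Multiset.filter_congr (fun s _ => by
    simp only [Function.comp_apply]
    exact and_comm))

lemma key_take (hM : InR p M) (hN : InR q N) (hP : InR r P)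
    (hp : p ≠ 0) (hq : q ≠ 0) (hr : r ≠ 0) :
    (ZIP p q M N).filter (fun x : ℕ × ℕ => decide (x.2 < q))
      = (ZIP p (q + r) M (concatMS q r N P)).filter (fun x : ℕ × ℕ => decide (x.2 < q)) := by
  have hdown : ∀ a b : ℕ, a ≤ b → (fun v : ℕ => decide (v < q)) b = true →
      (fun v : ℕ => decide (v < q)) a = true := by
    intro a b hab h
    simp only [decide_eq_true_eq] at *
    omega
  rw [ZIP, ZIP, filter_zip_snd _ hdown _ _ EL_sorted, filter_zip_snd _ hdown _ _ EL_sorted]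
  have hm1 := countP_lt_EL (p := p) hN hq
  have hm2 := countP_lt_EL_concat (p := p) hN hP hq hr
  have hmle : Multiset.card (N.filter (fun s : Seg => s.1 = 1 ∧ s.2 < q)) ≤ q + 1 := by
    have heq : N.filter (fun s : Seg => s.1 = 1 ∧ s.2 < q)
        = (N.filter (fun s : Seg => s.1 = 1)).filter (fun s : Seg => s.2 < q) := by
      rw [Multiset.filter_filter]
      exact (Multiset.filter_congr (fun s _ => and_comm)).symm
    have hle := Multiset.card_le_card (heq ▸ Multiset.filter_le
      (fun s : Seg => s.2 < q) (N.filter (fun s : Seg => s.1 = 1)))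
    have hcE : Multiset.card (N.filter (fun s : Seg => s.1 = 1)) = q + 1 := by
      have h := card_En hN hq
      rwa [En, Multiset.card_map] at h
    omega
  congr 1
  · -- equal prefixes of the starts lists
    rw [hm1, hm2]
    set m := Multiset.card (N.filter (fun s : Seg => s.1 = 1 ∧ s.2 < q)) with hm
    have hrev : ∀ k : ℕ, SL p k M = ((Sm p M).sort (· ≤ ·)).reverse ++ List.replicate k 1 := by
      intro k
      rw [SL, sort_add_replicate_one (Sm p M) (fun x hx => (mem_Sm hM x hx).1) k,
        List.reverse_append, List.reverse_replicate]
    rw [hrev q, hrev (q + r), List.take_append,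
      List.take_append, List.take_replicate, List.take_replicate]
    have hlen : (((Sm p M).sort (· ≤ ·)).reverse).length = p + 1 := by
      rw [List.length_reverse, Multiset.length_sort, card_Sm hM hp]
    rw [hlen]
    congr 2
    rw [Nat.min_eq_left (by omega), Nat.min_eq_left (by omega)]
  · -- equal lists of small ends
    apply fun h1 h2 h3 => List.Perm.eq_of_pairwise' (r := ((· ≤ ·) : ℕ → ℕ → Prop)) h2 h3 h1
    · rw [← Multiset.coe_eq_coe]
      have hc : ∀ (l : List ℕ), (↑(l.filter (fun v : ℕ => decide (v < q))) : Multiset ℕ)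
          = Multiset.filter (fun v : ℕ => v < q) ↑l := fun l => (Multiset.filter_coe _ _).symm
      rw [hc, hc, coe_EL, coe_EL, Multiset.filter_add, Multiset.filter_add]
      have e1 : Multiset.filter (fun v : ℕ => v < q) (Multiset.replicate p q) = 0 :=
        Multiset.filter_eq_nil.2 (fun a ha => by
          have := (Multiset.mem_replicate.1 ha).2; omega)
      have e2 : Multiset.filter (fun v : ℕ => v < q) (Multiset.replicate p (q + r)) = 0 :=
        Multiset.filter_eq_nil.2 (fun a ha => by
          have := (Multiset.mem_replicate.1 ha).2; omega)
      rw [e1, e2, add_zero, add_zero, filter_lt_En hN, filter_lt_En_concat hN hP hq hr]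
    · exact EL_sorted.filter _
    · exact EL_sorted.filter _

end RAux

namespace RAux

variable {p q r : ℕ} {M N P : Multiset Seg}

lemma coe_filter_map' {α : Type} (f : ℕ × ℕ → α) (l : List (ℕ × ℕ))
    (Pp : (ℕ × ℕ) → Prop) [DecidablePred Pp] :
    (↑((l.filter (fun x => decide (Pp x))).map f) : Multiset α)
      = Multiset.map f (Multiset.filter Pp ↑l) := by
  rw [Multiset.filter_coe, Multiset.map_coe]

lemma assocA (hM : InR p M) (hN : InR q N) (hP : InR r P)
    (hp : p ≠ 0) (hq : q ≠ 0) (hr : r ≠ 0) :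
    (concatMS (p + q) r (concatMS p q M N) P).filter
        (fun s : Seg => s.1 ≤ p ∧ p < s.2 ∧ s.2 < p + q)
      = (concatMS p (q + r) M (concatMS q r N P)).filter
        (fun s : Seg => s.1 ≤ p ∧ p < s.2 ∧ s.2 < p + q) := by
  have hC1 : InR (p + q) (concatMS p q M N) := InR_concat hM hN
  have hC2 : InR (q + r) (concatMS q r N P) := InR_concat hN hP
  have hpq : p + q ≠ 0 := by omega
  have hqr : q + r ≠ 0 := by omega
  have hL : (concatMS (p + q) r (concatMS p q M N) P).filter
      (fun s : Seg => s.1 ≤ p ∧ p < s.2 ∧ s.2 < p + q)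
      = ↑(((ZIP p q M N).filter (fun x : ℕ × ℕ => decide (x.2 < q))).map
          (fun x : ℕ × ℕ => (x.1, x.2 + p))) := by
    rw [concat_eq _ P hpq hr, Multiset.filter_add, Multiset.filter_add]
    have p1 : ((concatMS p q M N).filter (fun s : Seg => s.2 < p + q)).filter
        (fun s : Seg => s.1 ≤ p ∧ p < s.2 ∧ s.2 < p + q)
        = (concatMS p q M N).filter (fun s : Seg => s.1 ≤ p ∧ p < s.2 ∧ s.2 < p + q) := by
      rw [Multiset.filter_filter]
      exact Multiset.filter_congr (fun s _ => by constructor <;> intro <;> omega)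
    rw [p1]
    have p2 : (M.filter (fun s : Seg => s.2 < p)).filter
        (fun s : Seg => s.1 ≤ p ∧ p < s.2 ∧ s.2 < p + q) = 0 :=
      Multiset.filter_eq_nil.2 (fun a ha => by
        have := (Multiset.mem_filter.1 ha).2; omega)
    have p3 : ((N.filter (fun s : Seg => 1 < s.1)).map
        (fun s : Seg => (s.1 + p, s.2 + p))).filter
        (fun s : Seg => s.1 ≤ p ∧ p < s.2 ∧ s.2 < p + q) = 0 :=
      Multiset.filter_eq_nil.2 (fun a ha => by
        obtain ⟨t, ht, rfl⟩ := Multiset.mem_map.1 ha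
        have := (Multiset.mem_filter.1 ht).2
        simp only
        omega)
    have p4 : Multiset.filter (fun s : Seg => s.1 ≤ p ∧ p < s.2 ∧ s.2 < p + q)
        ↑(ZL p q M N)
        = ↑(((ZIP p q M N).filter (fun x : ℕ × ℕ => decide (x.2 < q))).map
            (fun x : ℕ × ℕ => (x.1, x.2 + p))) := by
      rw [ZL, filter_coe_map]
      congr 2
      apply List.filter_congr
      intro x hx
      have hb := mem_ZIP hM hN hp hq x hx
      exact decide_eq_decide.2 (by simp only; omega)
    have p5 : ((P.filter (fun s : Seg => 1 < s.1)).map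
        (fun s : Seg => (s.1 + (p + q), s.2 + (p + q)))).filter
        (fun s : Seg => s.1 ≤ p ∧ p < s.2 ∧ s.2 < p + q) = 0 :=
      Multiset.filter_eq_nil.2 (fun a ha => by
        obtain ⟨t, ht, rfl⟩ := Multiset.mem_map.1 ha
        have := (Multiset.mem_filter.1 ht).2
        simp only
        omega)
    have p6 : Multiset.filter (fun s : Seg => s.1 ≤ p ∧ p < s.2 ∧ s.2 < p + q)
        ↑(ZL (p + q) r (concatMS p q M N) P) = 0 := by
      rw [Multiset.filter_eq_nil]
      intro a ha
      obtain ⟨x, hx, rfl⟩ := List.mem_map.1 (Multiset.mem_coe.1 ha)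
      have hb := mem_ZIP hC1 hP hpq hr x hx
      simp only
      omega
    rw [p5, p6, concat_eq M N hp hq, Multiset.filter_add, Multiset.filter_add, p2, p3, p4]
    simp only [zero_add, add_zero]
  have hR : (concatMS p (q + r) M (concatMS q r N P)).filter
      (fun s : Seg => s.1 ≤ p ∧ p < s.2 ∧ s.2 < p + q)
      = ↑(((ZIP p (q + r) M (concatMS q r N P)).filter
          (fun x : ℕ × ℕ => decide (x.2 < q))).map (fun x : ℕ × ℕ => (x.1, x.2 + p))) := by
    rw [concat_eq M _ hp hqr, Multiset.filter_add, Multiset.filter_add]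
    have p2 : (M.filter (fun s : Seg => s.2 < p)).filter
        (fun s : Seg => s.1 ≤ p ∧ p < s.2 ∧ s.2 < p + q) = 0 :=
      Multiset.filter_eq_nil.2 (fun a ha => by
        have := (Multiset.mem_filter.1 ha).2; omega)
    have p3 : (((concatMS q r N P).filter (fun s : Seg => 1 < s.1)).map
        (fun s : Seg => (s.1 + p, s.2 + p))).filter
        (fun s : Seg => s.1 ≤ p ∧ p < s.2 ∧ s.2 < p + q) = 0 :=
      Multiset.filter_eq_nil.2 (fun a ha => by
        obtain ⟨t, ht, rfl⟩ := Multiset.mem_map.1 ha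
        have := (Multiset.mem_filter.1 ht).2
        simp only
        omega)
    have p4 : Multiset.filter (fun s : Seg => s.1 ≤ p ∧ p < s.2 ∧ s.2 < p + q)
        ↑(ZL p (q + r) M (concatMS q r N P))
        = ↑(((ZIP p (q + r) M (concatMS q r N P)).filter
            (fun x : ℕ × ℕ => decide (x.2 < q))).map (fun x : ℕ × ℕ => (x.1, x.2 + p))) := by
      rw [ZL, filter_coe_map]
      congr 2
      apply List.filter_congr
      intro x hx
      have hb := mem_ZIP hM hC2 hp hqr x hx
      exact decide_eq_decide.2 (by simp only; omega)
    rw [p2, p3, p4]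
    simp only [zero_add]
  rw [hL, hR, key_take hM hN hP hp hq hr]

lemma assocC (hM : InR p M) (hN : InR q N) (hP : InR r P)
    (hp : p ≠ 0) (hq : q ≠ 0) (hr : r ≠ 0) :
    (concatMS (p + q) r (concatMS p q M N) P).filter (fun s : Seg =>
        ¬((s.1 ≤ p ∧ p < s.2 ∧ s.2 < p + q) ∨ (s.1 ≤ p + q ∧ p + q < s.2)))
      = (concatMS p (q + r) M (concatMS q r N P)).filter (fun s : Seg =>
        ¬((s.1 ≤ p ∧ p < s.2 ∧ s.2 < p + q) ∨ (s.1 ≤ p + q ∧ p + q < s.2))) := by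
  have hC1 : InR (p + q) (concatMS p q M N) := InR_concat hM hN
  have hC2 : InR (q + r) (concatMS q r N P) := InR_concat hN hP
  have hpq : p + q ≠ 0 := by omega
  have hqr : q + r ≠ 0 := by omega
  have hL : (concatMS (p + q) r (concatMS p q M N) P).filter (fun s : Seg =>
        ¬((s.1 ≤ p ∧ p < s.2 ∧ s.2 < p + q) ∨ (s.1 ≤ p + q ∧ p + q < s.2)))
      = M.filter (fun s : Seg => s.2 < p)
        + (N.filter (fun s : Seg => 1 < s.1 ∧ s.2 < q)).map (fun s : Seg => (s.1 + p, s.2 + p))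
        + (P.filter (fun s : Seg => 1 < s.1)).map
            (fun s : Seg => (s.1 + (p + q), s.2 + (p + q))) := by
    rw [concat_eq _ P hpq hr, Multiset.filter_add, Multiset.filter_add]
    have p1 : ((concatMS p q M N).filter (fun s : Seg => s.2 < p + q)).filter (fun s : Seg =>
          ¬((s.1 ≤ p ∧ p < s.2 ∧ s.2 < p + q) ∨ (s.1 ≤ p + q ∧ p + q < s.2)))
        = M.filter (fun s : Seg => s.2 < p)
          + (N.filter (fun s : Seg => 1 < s.1 ∧ s.2 < q)).map
              (fun s : Seg => (s.1 + p, s.2 + p)) := by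
      rw [Multiset.filter_filter, concat_eq M N hp hq, Multiset.filter_add,
        Multiset.filter_add]
      have q1 : (M.filter (fun s : Seg => s.2 < p)).filter (fun s : Seg =>
            (¬((s.1 ≤ p ∧ p < s.2 ∧ s.2 < p + q) ∨ (s.1 ≤ p + q ∧ p + q < s.2))) ∧ s.2 < p + q)
          = M.filter (fun s : Seg => s.2 < p) :=
        Multiset.filter_eq_self.2 (fun a ha => by
          have := (Multiset.mem_filter.1 ha).2; omega)
      have q2 : ((N.filter (fun s : Seg => 1 < s.1)).map
            (fun s : Seg => (s.1 + p, s.2 + p))).filter (fun s : Seg =>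
            (¬((s.1 ≤ p ∧ p < s.2 ∧ s.2 < p + q) ∨ (s.1 ≤ p + q ∧ p + q < s.2))) ∧ s.2 < p + q)
          = (N.filter (fun s : Seg => 1 < s.1 ∧ s.2 < q)).map
              (fun s : Seg => (s.1 + p, s.2 + p)) := by
        rw [Multiset.filter_map]
        congr 1
        rw [Multiset.filter_filter]
        refine Multiset.filter_congr (fun s hs => ?_)
        have h := hN.1 s hs
        simp only [Function.comp_apply]
        constructor <;> intro <;> omega
      have q3 : Multiset.filter (fun s : Seg =>
            (¬((s.1 ≤ p ∧ p < s.2 ∧ s.2 < p + q) ∨ (s.1 ≤ p + q ∧ p + q < s.2))) ∧ s.2 < p + q)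
          ↑(ZL p q M N) = 0 := by
        rw [Multiset.filter_eq_nil]
        intro a ha
        obtain ⟨x, hx, rfl⟩ := List.mem_map.1 (Multiset.mem_coe.1 ha)
        have hb := mem_ZIP hM hN hp hq x hx
        simp only
        omega
      rw [q1, q2, q3, add_zero]
    have p2 : ((P.filter (fun s : Seg => 1 < s.1)).map
          (fun s : Seg => (s.1 + (p + q), s.2 + (p + q)))).filter (fun s : Seg =>
          ¬((s.1 ≤ p ∧ p < s.2 ∧ s.2 < p + q) ∨ (s.1 ≤ p + q ∧ p + q < s.2)))
        = (P.filter (fun s : Seg => 1 < s.1)).map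
            (fun s : Seg => (s.1 + (p + q), s.2 + (p + q))) :=
      Multiset.filter_eq_self.2 (fun a ha => by
        obtain ⟨t, ht, rfl⟩ := Multiset.mem_map.1 ha
        have := (Multiset.mem_filter.1 ht).2
        simp only
        omega)
    have p3 : Multiset.filter (fun s : Seg =>
          ¬((s.1 ≤ p ∧ p < s.2 ∧ s.2 < p + q) ∨ (s.1 ≤ p + q ∧ p + q < s.2)))
        ↑(ZL (p + q) r (concatMS p q M N) P) = 0 := by
      rw [Multiset.filter_eq_nil]
      intro a ha
      obtain ⟨x, hx, rfl⟩ := List.mem_map.1 (Multiset.mem_coe.1 ha)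
      have hb := mem_ZIP hC1 hP hpq hr x hx
      simp only
      omega
    rw [p1, p2, p3, add_zero]
  have hR : (concatMS p (q + r) M (concatMS q r N P)).filter (fun s : Seg =>
        ¬((s.1 ≤ p ∧ p < s.2 ∧ s.2 < p + q) ∨ (s.1 ≤ p + q ∧ p + q < s.2)))
      = M.filter (fun s : Seg => s.2 < p)
        + ((N.filter (fun s : Seg => 1 < s.1 ∧ s.2 < q)).map
              (fun s : Seg => (s.1 + p, s.2 + p))
          + (P.filter (fun s : Seg => 1 < s.1)).map
              (fun s : Seg => (s.1 + (p + q), s.2 + (p + q)))) := by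
    rw [concat_eq M _ hp hqr, Multiset.filter_add, Multiset.filter_add]
    have p1 : (M.filter (fun s : Seg => s.2 < p)).filter (fun s : Seg =>
          ¬((s.1 ≤ p ∧ p < s.2 ∧ s.2 < p + q) ∨ (s.1 ≤ p + q ∧ p + q < s.2)))
        = M.filter (fun s : Seg => s.2 < p) :=
      Multiset.filter_eq_self.2 (fun a ha => by
        have := (Multiset.mem_filter.1 ha).2; omega)
    have p2 : (((concatMS q r N P).filter (fun s : Seg => 1 < s.1)).map
          (fun s : Seg => (s.1 + p, s.2 + p))).filter (fun s : Seg =>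
          ¬((s.1 ≤ p ∧ p < s.2 ∧ s.2 < p + q) ∨ (s.1 ≤ p + q ∧ p + q < s.2)))
        = (N.filter (fun s : Seg => 1 < s.1 ∧ s.2 < q)).map (fun s : Seg => (s.1 + p, s.2 + p))
          + (P.filter (fun s : Seg => 1 < s.1)).map
              (fun s : Seg => (s.1 + (p + q), s.2 + (p + q))) := by
      rw [concat_filter_start_gt hN hP hq hr, Multiset.map_add, Multiset.map_add,
        Multiset.filter_add, Multiset.filter_add]
      have q1 : ((N.filter (fun s : Seg => 1 < s.1 ∧ s.2 < q)).map
            (fun s : Seg => (s.1 + p, s.2 + p))).filter (fun s : Seg =>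
            ¬((s.1 ≤ p ∧ p < s.2 ∧ s.2 < p + q) ∨ (s.1 ≤ p + q ∧ p + q < s.2)))
          = (N.filter (fun s : Seg => 1 < s.1 ∧ s.2 < q)).map
              (fun s : Seg => (s.1 + p, s.2 + p)) :=
        Multiset.filter_eq_self.2 (fun a ha => by
          obtain ⟨t, ht, rfl⟩ := Multiset.mem_map.1 ha
          have := (Multiset.mem_filter.1 ht).2
          simp only
          omega)
      have q2 : (((P.filter (fun s : Seg => 1 < s.1)).map
            (fun s : Seg => (s.1 + q, s.2 + q))).map
            (fun s : Seg => (s.1 + p, s.2 + p))).filter (fun s : Seg =>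
            ¬((s.1 ≤ p ∧ p < s.2 ∧ s.2 < p + q) ∨ (s.1 ≤ p + q ∧ p + q < s.2)))
          = (P.filter (fun s : Seg => 1 < s.1)).map
              (fun s : Seg => (s.1 + (p + q), s.2 + (p + q))) := by
        rw [Multiset.map_map]
        have hcomp : (P.filter (fun s : Seg => 1 < s.1)).map
            ((fun s : Seg => (s.1 + p, s.2 + p)) ∘ (fun s : Seg => (s.1 + q, s.2 + q)))
            = (P.filter (fun s : Seg => 1 < s.1)).map
              (fun s : Seg => (s.1 + (p + q), s.2 + (p + q))) :=
          Multiset.map_congr rfl (fun s _ => by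
            simp only [Function.comp_apply, Prod.mk.injEq]
            omega)
        rw [hcomp]
        exact Multiset.filter_eq_self.2 (fun a ha => by
          obtain ⟨t, ht, rfl⟩ := Multiset.mem_map.1 ha
          have := (Multiset.mem_filter.1 ht).2
          simp only
          omega)
      have q3 : (Multiset.map (fun s : Seg => (s.1 + p, s.2 + p))
            ↑(((ZIP q r N P).filter (fun x : ℕ × ℕ => decide (1 < x.1))).map
              (fun x : ℕ × ℕ => (x.1, x.2 + q)))).filter (fun s : Seg =>
            ¬((s.1 ≤ p ∧ p < s.2 ∧ s.2 < p + q) ∨ (s.1 ≤ p + q ∧ p + q < s.2))) = 0 := by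
        rw [Multiset.map_coe, List.map_map, Multiset.filter_eq_nil]
        intro a ha
        obtain ⟨x, hx, rfl⟩ := List.mem_map.1 (Multiset.mem_coe.1 ha)
        have hb := mem_ZIP hN hP hq hr x (List.mem_of_mem_filter hx)
        simp only [Function.comp_apply]
        omega
      rw [q1, q2, q3, add_zero]
    have p3 : Multiset.filter (fun s : Seg =>
          ¬((s.1 ≤ p ∧ p < s.2 ∧ s.2 < p + q) ∨ (s.1 ≤ p + q ∧ p + q < s.2)))
        ↑(ZL p (q + r) M (concatMS q r N P)) = 0 := by
      rw [Multiset.filter_eq_nil]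
      intro a ha
      obtain ⟨x, hx, rfl⟩ := List.mem_map.1 (Multiset.mem_coe.1 ha)
      have hb := mem_ZIP hM hC2 hp hqr x hx
      have hxe : x.2 ≠ q := by
        refine mem_EL_concat_ne (p := p) hN hP hq hr x.2 ?_
        exact (List.of_mem_zip (a := x.1) (b := x.2) (by simpa only [Prod.mk.eta, ZIP] using hx)).2
      simp only
      omega
    rw [p1, p2, p3, add_zero]
  rw [hL, hR, add_assoc]

end RAux

namespace RAux

variable {p q r : ℕ} {M N P : Multiset Seg}

lemma coe_map_fst_ZIP (hM : InR p M) (hN : InR q N) (hp : p ≠ 0) (hq : q ≠ 0) :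
    Multiset.map Prod.fst (↑(ZIP p q M N) : Multiset (ℕ × ℕ))
      = Sm p M + Multiset.replicate q 1 := by
  rw [Multiset.map_coe, map_fst_ZIP hM hN hp hq, coe_SL]

lemma coe_map_snd_ZIP (hM : InR p M) (hN : InR q N) (hp : p ≠ 0) (hq : q ≠ 0) :
    Multiset.map Prod.snd (↑(ZIP p q M N) : Multiset (ℕ × ℕ))
      = En N + Multiset.replicate p q := by
  rw [Multiset.map_coe, map_snd_ZIP hM hN hp hq, coe_EL]

lemma map_comp_coe_filter_fst {α : Type} (g : ℕ → α) (l : List (ℕ × ℕ))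
    (Q : ℕ → Prop) [DecidablePred Q] :
    (↑((l.filter (fun x => decide (Q x.1))).map (fun x : ℕ × ℕ => g x.1)) : Multiset α)
      = Multiset.map g (Multiset.filter Q (Multiset.map Prod.fst (↑l : Multiset (ℕ × ℕ)))) := by
  rw [Multiset.map_coe Prod.fst l, Multiset.filter_coe, Multiset.map_coe, List.filter_map,
    List.map_map]
  rfl

lemma map_comp_coe_filter_snd {α : Type} (g : ℕ → α) (l : List (ℕ × ℕ))
    (Q : ℕ → Prop) [DecidablePred Q] :
    (↑((l.filter (fun x => decide (Q x.2))).map (fun x : ℕ × ℕ => g x.2)) : Multiset α)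
      = Multiset.map g (Multiset.filter Q (Multiset.map Prod.snd (↑l : Multiset (ℕ × ℕ)))) := by
  rw [Multiset.map_coe Prod.snd l, Multiset.filter_coe, Multiset.map_coe, List.filter_map,
    List.map_map]
  rfl

lemma assocB_L (hM : InR p M) (hN : InR q N) (hP : InR r P)
    (hp : p ≠ 0) (hq : q ≠ 0) (hr : r ≠ 0) :
    (concatMS (p + q) r (concatMS p q M N) P).filter
        (fun s : Seg => s.1 ≤ p + q ∧ p + q < s.2)
      = ↑(ZL (p + q) r (concatMS p q M N) P) := by
  have hC1 : InR (p + q) (concatMS p q M N) := InR_concat hM hN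
  have hpq : p + q ≠ 0 := by omega
  rw [concat_eq _ P hpq hr, Multiset.filter_add, Multiset.filter_add]
  have p1 : ((concatMS p q M N).filter (fun s : Seg => s.2 < p + q)).filter
      (fun s : Seg => s.1 ≤ p + q ∧ p + q < s.2) = 0 := by
    rw [Multiset.filter_filter]
    exact Multiset.filter_eq_nil.2 (fun a _ => by omega)
  have p2 : ((P.filter (fun s : Seg => 1 < s.1)).map
      (fun s : Seg => (s.1 + (p + q), s.2 + (p + q)))).filter
      (fun s : Seg => s.1 ≤ p + q ∧ p + q < s.2) = 0 :=
    Multiset.filter_eq_nil.2 (fun a ha => by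
      obtain ⟨t, ht, rfl⟩ := Multiset.mem_map.1 ha
      have := (Multiset.mem_filter.1 ht).2
      simp only
      omega)
  have p3 : Multiset.filter (fun s : Seg => s.1 ≤ p + q ∧ p + q < s.2)
      ↑(ZL (p + q) r (concatMS p q M N) P) = ↑(ZL (p + q) r (concatMS p q M N) P) :=
    Multiset.filter_eq_self.2 (fun a ha => by
      obtain ⟨x, hx, rfl⟩ := List.mem_map.1 (Multiset.mem_coe.1 ha)
      have hb := mem_ZIP hC1 hP hpq hr x hx
      simp only
      omega)
  rw [p1, p2, p3, zero_add, zero_add]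

lemma assocB_R (hM : InR p M) (hN : InR q N) (hP : InR r P)
    (hp : p ≠ 0) (hq : q ≠ 0) (hr : r ≠ 0) :
    (concatMS p (q + r) M (concatMS q r N P)).filter
        (fun s : Seg => s.1 ≤ p + q ∧ p + q < s.2)
      = ↑(((ZIP q r N P).filter (fun x : ℕ × ℕ => decide (1 < x.1))).map
            (fun x : ℕ × ℕ => (x.1 + p, x.2 + q + p)))
        + ↑(((ZIP p (q + r) M (concatMS q r N P)).filter
            (fun y : ℕ × ℕ => decide (q < y.2))).map (fun x : ℕ × ℕ => (x.1, x.2 + p))) := by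
  have hC2 : InR (q + r) (concatMS q r N P) := InR_concat hN hP
  have hqr : q + r ≠ 0 := by omega
  rw [concat_eq M _ hp hqr, Multiset.filter_add, Multiset.filter_add]
  have p1 : (M.filter (fun s : Seg => s.2 < p)).filter
      (fun s : Seg => s.1 ≤ p + q ∧ p + q < s.2) = 0 :=
    Multiset.filter_eq_nil.2 (fun a ha => by
      have := (Multiset.mem_filter.1 ha).2; omega)
  have p2 : (((concatMS q r N P).filter (fun s : Seg => 1 < s.1)).map
      (fun s : Seg => (s.1 + p, s.2 + p))).filter
      (fun s : Seg => s.1 ≤ p + q ∧ p + q < s.2)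
      = ↑(((ZIP q r N P).filter (fun x : ℕ × ℕ => decide (1 < x.1))).map
          (fun x : ℕ × ℕ => (x.1 + p, x.2 + q + p))) := by
    rw [concat_filter_start_gt hN hP hq hr, Multiset.map_add, Multiset.map_add,
      Multiset.filter_add, Multiset.filter_add]
    have q1 : ((N.filter (fun s : Seg => 1 < s.1 ∧ s.2 < q)).map
        (fun s : Seg => (s.1 + p, s.2 + p))).filter
        (fun s : Seg => s.1 ≤ p + q ∧ p + q < s.2) = 0 :=
      Multiset.filter_eq_nil.2 (fun a ha => by
        obtain ⟨t, ht, rfl⟩ := Multiset.mem_map.1 ha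
        have := (Multiset.mem_filter.1 ht).2
        simp only
        omega)
    have q2 : (((P.filter (fun s : Seg => 1 < s.1)).map
        (fun s : Seg => (s.1 + q, s.2 + q))).map
        (fun s : Seg => (s.1 + p, s.2 + p))).filter
        (fun s : Seg => s.1 ≤ p + q ∧ p + q < s.2) = 0 := by
      rw [Multiset.map_map]
      exact Multiset.filter_eq_nil.2 (fun a ha => by
        obtain ⟨t, ht, rfl⟩ := Multiset.mem_map.1 ha
        have := (Multiset.mem_filter.1 ht).2
        simp only [Function.comp_apply]
        omega)
    have q3 : (Multiset.map (fun s : Seg => (s.1 + p, s.2 + p))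
        ↑(((ZIP q r N P).filter (fun x : ℕ × ℕ => decide (1 < x.1))).map
          (fun x : ℕ × ℕ => (x.1, x.2 + q)))).filter
        (fun s : Seg => s.1 ≤ p + q ∧ p + q < s.2)
        = ↑(((ZIP q r N P).filter (fun x : ℕ × ℕ => decide (1 < x.1))).map
            (fun x : ℕ × ℕ => (x.1 + p, x.2 + q + p))) := by
      rw [Multiset.map_coe, List.map_map]
      have hfun : List.map ((fun s : Seg => (s.1 + p, s.2 + p)) ∘ (fun x : ℕ × ℕ => (x.1, x.2 + q)))
          ((ZIP q r N P).filter (fun x : ℕ × ℕ => decide (1 < x.1)))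
          = List.map (fun x : ℕ × ℕ => (x.1 + p, x.2 + q + p))
            ((ZIP q r N P).filter (fun x : ℕ × ℕ => decide (1 < x.1))) :=
        List.map_congr_left (fun x _ => rfl)
      rw [hfun]
      exact Multiset.filter_eq_self.2 (fun a ha => by
        obtain ⟨x, hx, rfl⟩ := List.mem_map.1 (Multiset.mem_coe.1 ha)
        have hb := mem_ZIP hN hP hq hr x (List.mem_of_mem_filter hx)
        simp only
        omega)
    rw [q1, q2, q3, zero_add, zero_add]
  have p3 : Multiset.filter (fun s : Seg => s.1 ≤ p + q ∧ p + q < s.2)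
      ↑(ZL p (q + r) M (concatMS q r N P))
      = ↑(((ZIP p (q + r) M (concatMS q r N P)).filter
          (fun y : ℕ × ℕ => decide (q < y.2))).map (fun x : ℕ × ℕ => (x.1, x.2 + p))) := by
    rw [ZL, filter_coe_map]
    congr 2
    apply List.filter_congr
    intro y hy
    have hb := mem_ZIP hM hC2 hp hqr y hy
    exact decide_eq_decide.2 (by simp only; omega)
  rw [p1, p2, p3, zero_add]

end RAux

namespace RAux

variable {p q r : ℕ} {M N P : Multiset Seg}

lemma filter_gt_one_Sm :
    Multiset.filter (fun v : ℕ => 1 < v) (Sm q N)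
      = (N.filter (fun s : Seg => 1 < s.1 ∧ s.2 = q)).map Prod.fst := by
  rw [Sm, Multiset.filter_map, Multiset.filter_filter]
  rfl

lemma filter_gt_En_concat (hN : InR q N) (hP : InR r P) (hq : q ≠ 0) (hr : r ≠ 0) :
    Multiset.filter (fun v : ℕ => q < v) (En (concatMS q r N P))
      = ↑(((ZIP q r N P).filter (fun x : ℕ × ℕ => decide (x.1 = 1))).map
          (fun x : ℕ × ℕ => x.2 + q)) := by
  rw [En_concat hN hP hq hr, Multiset.filter_add]
  have h1 : Multiset.filter (fun v : ℕ => q < v)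
      ((N.filter (fun s : Seg => s.1 = 1 ∧ s.2 < q)).map Prod.snd) = 0 :=
    Multiset.filter_eq_nil.2 (fun a ha => by
      obtain ⟨s, hs, rfl⟩ := Multiset.mem_map.1 ha
      have := (Multiset.mem_filter.1 hs).2
      omega)
  have h2 : Multiset.filter (fun v : ℕ => q < v)
      ↑(((ZIP q r N P).filter (fun x : ℕ × ℕ => decide (x.1 = 1))).map
        (fun x : ℕ × ℕ => x.2 + q))
      = ↑(((ZIP q r N P).filter (fun x : ℕ × ℕ => decide (x.1 = 1))).map
        (fun x : ℕ × ℕ => x.2 + q)) :=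
    Multiset.filter_eq_self.2 (fun a ha => by
      obtain ⟨x, hx, rfl⟩ := List.mem_map.1 (Multiset.mem_coe.1 ha)
      have hb := mem_ZIP hN hP hq hr x (List.mem_of_mem_filter hx)
      omega)
  rw [h1, h2, zero_add]

lemma split_ZIP (hM : InR p M) (hN : InR q N) (hp : p ≠ 0) (hq : q ≠ 0) :
    Multiset.filter (fun x : ℕ × ℕ => x.2 = q) (↑(ZIP p q M N) : Multiset (ℕ × ℕ))
      + Multiset.filter (fun x : ℕ × ℕ => x.2 < q) ↑(ZIP p q M N)
      = ↑(ZIP p q M N) := by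
  conv_rhs => rw [← Multiset.filter_add_not (fun x : ℕ × ℕ => x.2 = q)
    (↑(ZIP p q M N) : Multiset (ℕ × ℕ))]
  congr 1
  refine Multiset.filter_congr (fun x hx => ?_)
  have := (mem_ZIP hM hN hp hq x (Multiset.mem_coe.1 hx)).2.2
  constructor <;> intro <;> omega

lemma split_ZIP_start (hN : InR q N) (hP : InR r P) (hq : q ≠ 0) (hr : r ≠ 0) :
    Multiset.filter (fun x : ℕ × ℕ => 1 < x.1) (↑(ZIP q r N P) : Multiset (ℕ × ℕ))
      + Multiset.filter (fun x : ℕ × ℕ => x.1 = 1) ↑(ZIP q r N P)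
      = ↑(ZIP q r N P) := by
  conv_rhs => rw [← Multiset.filter_add_not (fun x : ℕ × ℕ => 1 < x.1)
    (↑(ZIP q r N P) : Multiset (ℕ × ℕ))]
  congr 1
  refine Multiset.filter_congr (fun x hx => ?_)
  have := (mem_ZIP hN hP hq hr x (Multiset.mem_coe.1 hx)).1.1
  constructor <;> intro <;> omega

lemma split_ZIP_R (hM : InR p M) (hN : InR q N) (hP : InR r P)
    (hp : p ≠ 0) (hq : q ≠ 0) (hr : r ≠ 0) :
    Multiset.filter (fun y : ℕ × ℕ => q < y.2)
        (↑(ZIP p (q + r) M (concatMS q r N P)) : Multiset (ℕ × ℕ))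
      + Multiset.filter (fun y : ℕ × ℕ => y.2 < q) ↑(ZIP p (q + r) M (concatMS q r N P))
      = ↑(ZIP p (q + r) M (concatMS q r N P)) := by
  conv_rhs => rw [← Multiset.filter_add_not (fun y : ℕ × ℕ => q < y.2)
    (↑(ZIP p (q + r) M (concatMS q r N P)) : Multiset (ℕ × ℕ))]
  congr 1
  refine Multiset.filter_congr (fun y hy => ?_)
  have hyne : y.2 ≠ q := mem_EL_concat_ne (p := p) hN hP hq hr y.2
    ((List.of_mem_zip (a := y.1) (b := y.2)
      (by simpa only [Prod.mk.eta, ZIP] using Multiset.mem_coe.1 hy)).2)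
  constructor <;> intro <;> omega

lemma assocB_fst (hM : InR p M) (hN : InR q N) (hP : InR r P)
    (hp : p ≠ 0) (hq : q ≠ 0) (hr : r ≠ 0) :
    Multiset.map Prod.fst (↑(ZL (p + q) r (concatMS p q M N) P) : Multiset Seg)
      = Multiset.map Prod.fst
          ((↑(((ZIP q r N P).filter (fun x : ℕ × ℕ => decide (1 < x.1))).map
              (fun x : ℕ × ℕ => (x.1 + p, x.2 + q + p))) : Multiset Seg)
            + (↑(((ZIP p (q + r) M (concatMS q r N P)).filter
              (fun y : ℕ × ℕ => decide (q < y.2))).map (fun x : ℕ × ℕ => (x.1, x.2 + p)))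
              : Multiset Seg)) := by
  have hC1 : InR (p + q) (concatMS p q M N) := InR_concat hM hN
  have hC2 : InR (q + r) (concatMS q r N P) := InR_concat hN hP
  have hpq : p + q ≠ 0 := by omega
  have hqr : q + r ≠ 0 := by omega
  have hL : Multiset.map Prod.fst (↑(ZL (p + q) r (concatMS p q M N) P) : Multiset Seg)
      = Sm (p + q) (concatMS p q M N) + Multiset.replicate r 1 := by
    rw [ZL, Multiset.map_coe, List.map_map]
    have e0 : List.map (Prod.fst ∘ fun x : ℕ × ℕ => (x.1, x.2 + (p + q)))
        (ZIP (p + q) r (concatMS p q M N) P)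
        = List.map Prod.fst (ZIP (p + q) r (concatMS p q M N) P) :=
      List.map_congr_left (fun x _ => rfl)
    rw [e0, map_fst_ZIP hC1 hP hpq hr, coe_SL]
  have hR1 : (↑((((ZIP q r N P).filter (fun x : ℕ × ℕ => decide (1 < x.1))).map
        (fun x : ℕ × ℕ => (x.1 + p, x.2 + q + p))).map Prod.fst) : Multiset ℕ)
      = (N.filter (fun s : Seg => 1 < s.1 ∧ s.2 = q)).map (fun s : Seg => s.1 + p) := by
    rw [List.map_map]
    have e0 : List.map (Prod.fst ∘ fun x : ℕ × ℕ => (x.1 + p, x.2 + q + p))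
        ((ZIP q r N P).filter (fun x : ℕ × ℕ => decide (1 < x.1)))
        = List.map (fun x : ℕ × ℕ => (fun v : ℕ => v + p) x.1)
          ((ZIP q r N P).filter (fun x : ℕ × ℕ => decide (1 < x.1))) :=
      List.map_congr_left (fun x _ => rfl)
    rw [e0, map_comp_coe_filter_fst (fun v : ℕ => v + p) (ZIP q r N P) (fun v : ℕ => 1 < v),
      coe_map_fst_ZIP hN hP hq hr, Multiset.filter_add]
    have e1 : Multiset.filter (fun v : ℕ => 1 < v) (Multiset.replicate r 1) = 0 :=
      Multiset.filter_eq_nil.2 (fun a ha => by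
        have := (Multiset.mem_replicate.1 ha).2; omega)
    rw [e1, add_zero, filter_gt_one_Sm, Multiset.map_map]
    rfl
  have hstar : Multiset.map Prod.fst (Multiset.filter (fun x : ℕ × ℕ => x.2 = q)
        (↑(ZIP p q M N) : Multiset (ℕ × ℕ))) + Multiset.replicate r 1
      = Multiset.map Prod.fst (Multiset.filter (fun y : ℕ × ℕ => q < y.2)
          (↑(ZIP p (q + r) M (concatMS q r N P)) : Multiset (ℕ × ℕ))) := by
    have hU : Multiset.map Prod.fst (Multiset.filter (fun x : ℕ × ℕ => x.2 < q)
          (↑(ZIP p q M N) : Multiset (ℕ × ℕ)))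
        = Multiset.map Prod.fst (Multiset.filter (fun y : ℕ × ℕ => y.2 < q)
          (↑(ZIP p (q + r) M (concatMS q r N P)) : Multiset (ℕ × ℕ))) := by
      rw [Multiset.filter_coe, Multiset.filter_coe, key_take hM hN hP hp hq hr]
    have e1 := congrArg (Multiset.map Prod.fst) (split_ZIP hM hN hp hq)
    rw [Multiset.map_add, coe_map_fst_ZIP hM hN hp hq] at e1
    have e2 := congrArg (Multiset.map Prod.fst) (split_ZIP_R hM hN hP hp hq hr)
    rw [Multiset.map_add, coe_map_fst_ZIP hM hC2 hp hqr] at e2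
    have hcalc : Multiset.map Prod.fst (Multiset.filter (fun x : ℕ × ℕ => x.2 = q)
          (↑(ZIP p q M N) : Multiset (ℕ × ℕ))) + Multiset.replicate r 1
          + Multiset.map Prod.fst (Multiset.filter (fun y : ℕ × ℕ => y.2 < q)
            (↑(ZIP p (q + r) M (concatMS q r N P)) : Multiset (ℕ × ℕ)))
        = Multiset.map Prod.fst (Multiset.filter (fun y : ℕ × ℕ => q < y.2)
            (↑(ZIP p (q + r) M (concatMS q r N P)) : Multiset (ℕ × ℕ)))
          + Multiset.map Prod.fst (Multiset.filter (fun y : ℕ × ℕ => y.2 < q)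
            (↑(ZIP p (q + r) M (concatMS q r N P)) : Multiset (ℕ × ℕ))) := by
      conv_lhs => rw [← hU]
      rw [add_right_comm, e1, add_assoc, ← Multiset.replicate_add]
      exact e2.symm
    exact add_right_cancel hcalc
  have cv1 : (↑((((ZIP p q M N).filter (fun x : ℕ × ℕ => decide (x.2 = q))).map
        Prod.fst)) : Multiset ℕ)
      = Multiset.map Prod.fst (Multiset.filter (fun x : ℕ × ℕ => x.2 = q)
          (↑(ZIP p q M N) : Multiset (ℕ × ℕ))) := by
    rw [Multiset.filter_coe, Multiset.map_coe]
  have cv2 : Multiset.map Prod.fst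
        (↑(((ZIP p (q + r) M (concatMS q r N P)).filter
          (fun y : ℕ × ℕ => decide (q < y.2))).map (fun x : ℕ × ℕ => (x.1, x.2 + p)))
          : Multiset Seg)
      = Multiset.map Prod.fst (Multiset.filter (fun y : ℕ × ℕ => q < y.2)
          (↑(ZIP p (q + r) M (concatMS q r N P)) : Multiset (ℕ × ℕ))) := by
    rw [Multiset.filter_coe, Multiset.map_coe, Multiset.map_coe, List.map_map]
    exact congrArg _ (List.map_congr_left (fun x _ => rfl))
  rw [hL, Sm_concat hM hN hp hq, cv1, add_assoc, hstar, Multiset.map_add, Multiset.map_coe,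
    hR1, cv2]

end RAux

namespace RAux

variable {p q r : ℕ} {M N P : Multiset Seg}

lemma coe_filter_map_snd_of {α : Type} (g : ℕ → α) (l : List (ℕ × ℕ))
    (Q : ℕ × ℕ → Prop) [DecidablePred Q] :
    (↑((l.filter (fun x => decide (Q x))).map (fun x : ℕ × ℕ => g x.2)) : Multiset α)
      = Multiset.map g (Multiset.map Prod.snd
          (Multiset.filter Q (↑l : Multiset (ℕ × ℕ)))) := by
  rw [Multiset.map_map, Multiset.filter_coe, Multiset.map_coe]
  exact congrArg _ (List.map_congr_left (fun x _ => rfl))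

lemma assocB_snd (hM : InR p M) (hN : InR q N) (hP : InR r P)
    (hp : p ≠ 0) (hq : q ≠ 0) (hr : r ≠ 0) :
    Multiset.map Prod.snd (↑(ZL (p + q) r (concatMS p q M N) P) : Multiset Seg)
      = Multiset.map Prod.snd
          ((↑(((ZIP q r N P).filter (fun x : ℕ × ℕ => decide (1 < x.1))).map
              (fun x : ℕ × ℕ => (x.1 + p, x.2 + q + p))) : Multiset Seg)
            + (↑(((ZIP p (q + r) M (concatMS q r N P)).filter
              (fun y : ℕ × ℕ => decide (q < y.2))).map (fun x : ℕ × ℕ => (x.1, x.2 + p)))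
              : Multiset Seg)) := by
  have hC1 : InR (p + q) (concatMS p q M N) := InR_concat hM hN
  have hC2 : InR (q + r) (concatMS q r N P) := InR_concat hN hP
  have hpq : p + q ≠ 0 := by omega
  have hqr : q + r ≠ 0 := by omega
  have hL : Multiset.map Prod.snd (↑(ZL (p + q) r (concatMS p q M N) P) : Multiset Seg)
      = Multiset.map (fun v : ℕ => v + (p + q)) (En P)
        + Multiset.replicate (p + q) (r + (p + q)) := by
    rw [ZL, Multiset.map_coe, List.map_map]
    have e1 : (↑(List.map (Prod.snd ∘ fun x : ℕ × ℕ => (x.1, x.2 + (p + q)))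
          (ZIP (p + q) r (concatMS p q M N) P)) : Multiset ℕ)
        = Multiset.map (fun v : ℕ => v + (p + q)) (Multiset.map Prod.snd
            (↑(ZIP (p + q) r (concatMS p q M N) P) : Multiset (ℕ × ℕ))) := by
      rw [Multiset.map_map, Multiset.map_coe]
      exact congrArg _ (List.map_congr_left (fun x _ => rfl))
    rw [e1, coe_map_snd_ZIP hC1 hP hpq hr, Multiset.map_add, Multiset.map_replicate]
  have h1 : Multiset.map Prod.snd
      (↑(((ZIP q r N P).filter (fun x : ℕ × ℕ => decide (1 < x.1))).map
        (fun x : ℕ × ℕ => (x.1 + p, x.2 + q + p))) : Multiset Seg)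
      = (↑(((ZIP q r N P).filter (fun x : ℕ × ℕ => decide (1 < x.1))).map
          (fun x : ℕ × ℕ => x.2 + q + p)) : Multiset ℕ) := by
    rw [Multiset.map_coe, List.map_map]
    exact congrArg _ (List.map_congr_left (fun x _ => rfl))
  have h2 : Multiset.map Prod.snd
      (↑(((ZIP p (q + r) M (concatMS q r N P)).filter
        (fun y : ℕ × ℕ => decide (q < y.2))).map (fun x : ℕ × ℕ => (x.1, x.2 + p)))
        : Multiset Seg)
      = (↑(((ZIP q r N P).filter (fun x : ℕ × ℕ => decide (x.1 = 1))).map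
          (fun x : ℕ × ℕ => x.2 + q + p)) : Multiset ℕ)
        + Multiset.replicate p (q + r + p) := by
    have s1 : Multiset.map Prod.snd
        (↑(((ZIP p (q + r) M (concatMS q r N P)).filter
          (fun y : ℕ × ℕ => decide (q < y.2))).map (fun x : ℕ × ℕ => (x.1, x.2 + p)))
          : Multiset Seg)
        = (↑(((ZIP p (q + r) M (concatMS q r N P)).filter
            (fun y : ℕ × ℕ => decide (q < y.2))).map (fun y : ℕ × ℕ => (fun v : ℕ => v + p) y.2))
            : Multiset ℕ) := by
      rw [Multiset.map_coe, List.map_map]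
      exact congrArg _ (List.map_congr_left (fun x _ => rfl))
    rw [s1, coe_filter_map_snd_of (fun v : ℕ => v + p) _ (fun y : ℕ × ℕ => q < y.2)]
    have s2 : Multiset.map Prod.snd (Multiset.filter (fun y : ℕ × ℕ => q < y.2)
          (↑(ZIP p (q + r) M (concatMS q r N P)) : Multiset (ℕ × ℕ)))
        = Multiset.filter (fun v : ℕ => q < v) (Multiset.map Prod.snd
            (↑(ZIP p (q + r) M (concatMS q r N P)) : Multiset (ℕ × ℕ))) :=
      (Multiset.filter_map (fun v : ℕ => q < v) Prod.snd _).symm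
    rw [s2, coe_map_snd_ZIP hM hC2 hp hqr, Multiset.filter_add,
      filter_gt_En_concat hN hP hq hr]
    have s3 : Multiset.filter (fun v : ℕ => q < v) (Multiset.replicate p (q + r))
        = Multiset.replicate p (q + r) :=
      Multiset.filter_eq_self.2 (fun a ha => by
        have := (Multiset.mem_replicate.1 ha).2; omega)
    rw [s3, Multiset.map_add, Multiset.map_replicate]
    congr 1
    rw [Multiset.map_coe, List.map_map]
    exact congrArg _ (List.map_congr_left (fun x _ => rfl))
  have hsum : (↑(((ZIP q r N P).filter (fun x : ℕ × ℕ => decide (1 < x.1))).map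
        (fun x : ℕ × ℕ => x.2 + q + p)) : Multiset ℕ)
      + (↑(((ZIP q r N P).filter (fun x : ℕ × ℕ => decide (x.1 = 1))).map
        (fun x : ℕ × ℕ => x.2 + q + p)) : Multiset ℕ)
      = Multiset.map (fun v : ℕ => v + q + p) (En P)
        + Multiset.replicate q (r + q + p) := by
    have c1 : (↑(((ZIP q r N P).filter (fun x : ℕ × ℕ => decide (1 < x.1))).map
          (fun x : ℕ × ℕ => x.2 + q + p)) : Multiset ℕ)
        = Multiset.map (fun v : ℕ => v + q + p) (Multiset.map Prod.snd
            (Multiset.filter (fun x : ℕ × ℕ => 1 < x.1)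
              (↑(ZIP q r N P) : Multiset (ℕ × ℕ)))) :=
      coe_filter_map_snd_of (fun v : ℕ => v + q + p) _ (fun x : ℕ × ℕ => 1 < x.1)
    have c2 : (↑(((ZIP q r N P).filter (fun x : ℕ × ℕ => decide (x.1 = 1))).map
          (fun x : ℕ × ℕ => x.2 + q + p)) : Multiset ℕ)
        = Multiset.map (fun v : ℕ => v + q + p) (Multiset.map Prod.snd
            (Multiset.filter (fun x : ℕ × ℕ => x.1 = 1)
              (↑(ZIP q r N P) : Multiset (ℕ × ℕ)))) :=
      coe_filter_map_snd_of (fun v : ℕ => v + q + p) _ (fun x : ℕ × ℕ => x.1 = 1)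
    rw [c1, c2, ← Multiset.map_add, ← Multiset.map_add, split_ZIP_start hN hP hq hr,
      coe_map_snd_ZIP hN hP hq hr, Multiset.map_add, Multiset.map_replicate]
  rw [hL, Multiset.map_add, h1, h2]
  conv_rhs => rw [← add_assoc]
  rw [hsum]
  have g1 : Multiset.map (fun v : ℕ => v + (p + q)) (En P)
      = Multiset.map (fun v : ℕ => v + q + p) (En P) :=
    Multiset.map_congr rfl (fun v _ => by omega)
  have g2 : Multiset.replicate (p + q) (r + (p + q))
      = Multiset.replicate q (r + q + p) + Multiset.replicate p (q + r + p) := by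
    have e : Multiset.replicate (p + q) (r + (p + q))
        = Multiset.replicate (q + p) (r + q + p) := by
      rw [show p + q = q + p from Nat.add_comm p q,
        show r + (q + p) = r + q + p from by omega]
    rw [e, Multiset.replicate_add]
    congr 1
    rw [show q + r + p = r + q + p from by omega]
  rw [g1, g2]
  exact (add_assoc _ _ _).symm

lemma assocB (hM : InR p M) (hN : InR q N) (hP : InR r P)
    (hp : p ≠ 0) (hq : q ≠ 0) (hr : r ≠ 0) :
    (concatMS (p + q) r (concatMS p q M N) P).filter
        (fun s : Seg => s.1 ≤ p + q ∧ p + q < s.2)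
      = (concatMS p (q + r) M (concatMS q r N P)).filter
        (fun s : Seg => s.1 ≤ p + q ∧ p + q < s.2) := by
  have hC2 : InR (q + r) (concatMS q r N P) := InR_concat hN hP
  have hqr : q + r ≠ 0 := by omega
  rw [assocB_L hM hN hP hp hq hr, assocB_R hM hN hP hp hq hr]
  refine chain_unique _ _ (chain_of_pairwise ZL_pairwise) ?_
    (assocB_fst hM hN hP hp hq hr) (assocB_snd hM hN hP hp hq hr)
  -- chain of RHS
  have key2 : ∀ x ∈ ZIP q r N P, 1 < x.1 →
      ∀ y ∈ ZIP p (q + r) M (concatMS q r N P), q < y.2 →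
      Comp (x.1 + p, x.2 + q + p) (y.1, y.2 + p) := by
    intro x hx hx1 y hy hy2
    have hyE : y.2 ∈ En (concatMS q r N P) + Multiset.replicate p (q + r) := by
      rw [← coe_EL]
      exact Multiset.mem_coe.2 (List.of_mem_zip (a := y.1) (b := y.2)
        (by simpa only [Prod.mk.eta, ZIP] using hy)).2
    have hxb := mem_ZIP hN hP hq hr x hx
    have hyb := mem_ZIP hM hC2 hp hqr y hy
    have hle : x.2 + q ≤ y.2 := by
      rcases Multiset.mem_add.1 hyE with h | h
      · rw [En_concat hN hP hq hr] at h
        rcases Multiset.mem_add.1 h with h | h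
        · obtain ⟨s, hs, heq2⟩ := Multiset.mem_map.1 h
          have := (Multiset.mem_filter.1 hs).2
          omega
        · obtain ⟨x', hx', heq2⟩ := List.mem_map.1 (Multiset.mem_coe.1 h)
          have hx'1 : x'.1 = 1 := by
            have := (List.mem_filter.1 hx').2
            simpa using this
          have hx'Z := List.mem_of_mem_filter hx'
          have hne : x ≠ x' := fun he => by rw [he] at hx1; omega
          have hsym : Symmetric (fun a b : ℕ × ℕ =>
              (b.1 ≤ a.1 ∧ a.2 ≤ b.2) ∨ (a.1 ≤ b.1 ∧ b.2 ≤ a.2)) :=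
            fun a b h => h.elim Or.inr Or.inl
          have hpw := (ZIP_pairwise (p := q) (q := r) (M := N) (N := P)).imp
            (fun {a b} h => (Or.inl h :
              (b.1 ≤ a.1 ∧ a.2 ≤ b.2) ∨ (a.1 ≤ b.1 ∧ b.2 ≤ a.2)))
          haveI : Std.Symm (fun a b : ℕ × ℕ =>
              (b.1 ≤ a.1 ∧ a.2 ≤ b.2) ∨ (a.1 ≤ b.1 ∧ b.2 ≤ a.2)) := ⟨fun _ _ h => hsym h⟩
          rcases hpw.forall hx hx'Z hne with ⟨h1, h2⟩ | ⟨h1, h2⟩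
          · omega
          · omega
      · have := (Multiset.mem_replicate.1 h).2
        omega
    exact Or.inl ⟨show y.1 ≤ x.1 + p by omega, show x.2 + q + p ≤ y.2 + p by omega⟩
  intro a ha b hb
  rcases Multiset.mem_add.1 ha with ha | ha <;> rcases Multiset.mem_add.1 hb with hb | hb
  · refine chain_of_pairwise ?_ a ha b hb
    rw [List.pairwise_map]
    exact ((ZIP_pairwise (p := q) (q := r) (M := N) (N := P)).filter _).imp
      (fun {x y} h => Or.inl ⟨show y.1 + p ≤ x.1 + p by omega,
        show x.2 + q + p ≤ y.2 + q + p by omega⟩)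
  · obtain ⟨x, hx, rfl⟩ := List.mem_map.1 (Multiset.mem_coe.1 ha)
    obtain ⟨y, hy, rfl⟩ := List.mem_map.1 (Multiset.mem_coe.1 hb)
    have hx1 : 1 < x.1 := by simpa using (List.mem_filter.1 hx).2
    have hy2 : q < y.2 := by simpa using (List.mem_filter.1 hy).2
    exact key2 x (List.mem_of_mem_filter hx) hx1 y (List.mem_of_mem_filter hy) hy2
  · obtain ⟨y, hy, rfl⟩ := List.mem_map.1 (Multiset.mem_coe.1 ha)
    obtain ⟨x, hx, rfl⟩ := List.mem_map.1 (Multiset.mem_coe.1 hb)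
    have hx1 : 1 < x.1 := by simpa using (List.mem_filter.1 hx).2
    have hy2 : q < y.2 := by simpa using (List.mem_filter.1 hy).2
    exact (key2 x (List.mem_of_mem_filter hx) hx1 y (List.mem_of_mem_filter hy) hy2).symm
  · refine chain_of_pairwise ?_ a ha b hb
    rw [List.pairwise_map]
    exact ((ZIP_pairwise (p := p) (q := q + r) (M := M)
        (N := concatMS q r N P)).filter _).imp
      (fun {x y} h => Or.inl ⟨show y.1 ≤ x.1 by omega,
        show x.2 + p ≤ y.2 + p by omega⟩)

lemma assoc_main (hM : InR p M) (hN : InR q N) (hP : InR r P) :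
    concatMS (p + q) r (concatMS p q M N) P
      = concatMS p (q + r) M (concatMS q r N P) := by
  rcases Nat.eq_zero_or_pos p with rfl | hp
  · have h1 : concatMS 0 q M N = N := by rw [concatMS, if_pos rfl]
    have h2 : concatMS 0 (q + r) M (concatMS q r N P) = concatMS q r N P := by
      rw [concatMS, if_pos rfl]
    rw [h1, h2, Nat.zero_add]
  rcases Nat.eq_zero_or_pos q with rfl | hq
  · have h1 : concatMS p 0 M N = M := by rw [concatMS, if_neg (by omega), if_pos rfl]
    have h2 : concatMS 0 r N P = P := by rw [concatMS, if_pos rfl]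
    rw [h1, h2, Nat.add_zero, Nat.zero_add]
  rcases Nat.eq_zero_or_pos r with rfl | hr
  · have h1 : concatMS (p + q) 0 (concatMS p q M N) P = concatMS p q M N := by
      rw [concatMS, if_neg (by omega), if_pos rfl]
    have h2 : concatMS q 0 N P = N := by rw [concatMS, if_neg (by omega), if_pos rfl]
    rw [h1, h2, Nat.add_zero]
  · have hA := assocA hM hN hP (by omega) (by omega) (by omega)
    have hB := assocB hM hN hP (by omega) (by omega) (by omega)
    have hC := assocC hM hN hP (by omega) (by omega) (by omega)
    have t1 := tri_partition p q (concatMS (p + q) r (concatMS p q M N) P)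
    have t2 := tri_partition p q (concatMS p (q + r) M (concatMS q r N P))
    rw [t1, hA, hB, hC, ← t2]

end RAux


/-- the set `R` of all multisegments of weight `(n+1,…,n+1)`,
with concatenation, is a graded monoid with the empty multisegment as
identity; the suspension map is injective and its image consists of primitive
elements (elements which are not concatenations of two multisegments of
positive length). -/
theorem R_graded_monoid_and_suspension :
    -- concatenation is graded
    (∀ p q M N, InR p M → InR q N → InR (p + q) (concatMS p q M N)) ∧
    -- concatenation is associative
    (∀ p q r M N P, InR p M → InR q N → InR r P →
      concatMS (p + q) r (concatMS p q M N) P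
        = concatMS p (q + r) M (concatMS q r N P)) ∧
    -- the empty multisegment is a two-sided identity
    (∀ p M, InR p M → concatMS p 0 M 0 = M ∧ concatMS 0 p 0 M = M) ∧
    -- the suspension map is injective
    (∀ n M M', InR n M → InR n M' → suspMS n M = suspMS n M' → M = M') ∧
    -- the image of the suspension map consists of primitive elements
    (∀ n M, InR n M → ¬ ∃ (p q : ℕ) (A B : Multiset Seg),
      1 ≤ p ∧ 1 ≤ q ∧ p + q = n + 2 ∧ InR p A ∧ InR q B ∧
      suspMS n M = concatMS p q A B) :=
  ⟨fun _ _ _ _ hM hN => RAux.InR_concat hM hN,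
    fun _ _ _ _ _ _ hM hN hP => RAux.assoc_main hM hN hP,
    RAux.part3, RAux.part4, RAux.part5⟩
end
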